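/- arXiv:2604.02264 — 11 statements merged into one kernel-verified Lean document; each statement's English description precedes it below -/
import Mathlib

section
/- Let F be a bipartite graph with bipartition S ∪ T such that some vertex v* ∈ T is adjacent to every vertex of S, and suppose F contains a cycle. Then any ν ⊆ V(F) with |ν| ≥ 3 and (e(F[ν])-1)/(|ν|-2) = m_2(F) must contain v*. -/
open Finset

/-- Number of edges of `F` induced by the vertex set `ν`. -/
def eInd {V : Type*} [Fintype V] [DecidableEq V] (F : SimpleGraph V) [DecidableRel F.Adj]
    (ν : Finset V) : ℕ :=
  (F.edgeFinset.filter (fun e => ∀ v ∈ e, v ∈ ν)).card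

/-- The 2-density of `F`: the maximum of `(e(F[ν]) - 1)/(|ν| - 2)` over `ν` with `|ν| ≥ 3`. -/
noncomputable def m2 {V : Type*} [Fintype V] [DecidableEq V] (F : SimpleGraph V)
    [DecidableRel F.Adj] : ℝ :=
  sSup {x : ℝ | ∃ ν : Finset V, 3 ≤ ν.card ∧
    x = ((eInd F ν : ℝ) - 1) / ((ν.card : ℝ) - 2)}

lemma eInd_le_bip {V : Type*} [Fintype V] [DecidableEq V] (F : SimpleGraph V)
    [DecidableRel F.Adj] (S T : Finset V)
    (hBip : ∀ u v, F.Adj u v → (u ∈ S ∧ v ∈ T) ∨ (u ∈ T ∧ v ∈ S))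
    (ν : Finset V) : eInd F ν ≤ (ν ∩ S).card * (ν ∩ T).card := by
  have hsub : (F.edgeFinset.filter (fun e => ∀ v ∈ e, v ∈ ν)) ⊆
      ((ν ∩ S) ×ˢ (ν ∩ T)).image (fun p => s(p.1, p.2)) := by
    intro e he
    simp only [mem_filter, SimpleGraph.mem_edgeFinset] at he
    obtain ⟨hes, hev⟩ := he
    induction e using Sym2.ind with
    | _ a b =>
      rw [SimpleGraph.mem_edgeSet] at hes
      have ha := hev a (by simp)
      have hb := hev b (by simp)
      rcases hBip a b hes with ⟨h1, h2⟩ | ⟨h1, h2⟩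
      · exact mem_image.mpr ⟨(a, b), by simp [mem_product, mem_inter, *], rfl⟩
      · exact mem_image.mpr ⟨(b, a), by simp [mem_product, mem_inter, *], Sym2.eq_swap⟩
  calc eInd F ν ≤ _ := card_le_card hsub
    _ ≤ _ := card_image_le
    _ = _ := card_product _ _

lemma eInd_insert_ge {V : Type*} [Fintype V] [DecidableEq V] (F : SimpleGraph V)
    [DecidableRel F.Adj] (S : Finset V) (vstar : V)
    (hComp : ∀ u ∈ S, F.Adj vstar u)
    (ν : Finset V) (hvν : vstar ∉ ν) :
    eInd F ν + (ν ∩ S).card ≤ eInd F (insert vstar ν) := by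
  classical
  set A := F.edgeFinset.filter (fun e => ∀ v ∈ e, v ∈ ν) with hA
  set B := (ν ∩ S).image (fun a => s(vstar, a)) with hBdef
  have hdisj : Disjoint A B := by
    rw [disjoint_left]
    intro e heA heB
    simp only [hBdef, mem_image] at heB
    obtain ⟨a, _, rfl⟩ := heB
    simp only [hA, mem_filter] at heA
    exact hvν (heA.2 vstar (by simp))
  have hsub : A ∪ B ⊆ F.edgeFinset.filter (fun e => ∀ v ∈ e, v ∈ insert vstar ν) := by
    intro e he
    rcases mem_union.mp he with h | h
    · simp only [hA, mem_filter] at h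
      exact mem_filter.mpr ⟨h.1, fun v hv => mem_insert_of_mem (h.2 v hv)⟩
    · simp only [hBdef, mem_image] at h
      obtain ⟨a, ha, rfl⟩ := h
      rw [mem_inter] at ha
      refine mem_filter.mpr ⟨?_, ?_⟩
      · rw [SimpleGraph.mem_edgeFinset, SimpleGraph.mem_edgeSet]
        exact hComp a ha.2
      · intro v hv
        rcases Sym2.mem_iff.mp hv with rfl | rfl
        · exact mem_insert_self _ _
        · exact mem_insert_of_mem ha.1
  have hBcard : B.card = (ν ∩ S).card := by
    rw [hBdef, card_image_of_injOn]
    intro a _ b _ h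
    exact (Sym2.congr_right).mp h
  calc eInd F ν + (ν ∩ S).card = A.card + B.card := by rw [hBcard]; rfl
    _ = (A ∪ B).card := (card_union_of_disjoint hdisj).symm
    _ ≤ _ := card_le_card hsub

/-- Let `F` be bipartite with parts `S, T` and `v* ∈ T` adjacent to every vertex of `S`, and
suppose `F` contains a cycle.  Then any `ν ⊆ V(F)` with `|ν| ≥ 3` achieving
`(e(F[ν]) - 1)/(|ν| - 2) = m₂(F)` contains `v*`. -/
theorem stmt2 {V : Type*} [Fintype V] [DecidableEq V] (F : SimpleGraph V) [DecidableRel F.Adj]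
    (S T : Finset V) (vstar : V)
    (hUnion : S ∪ T = Finset.univ) (hDisj : Disjoint S T)
    (hBip : ∀ u v, F.Adj u v → (u ∈ S ∧ v ∈ T) ∨ (u ∈ T ∧ v ∈ S))
    (hv : vstar ∈ T) (hComp : ∀ u ∈ S, F.Adj vstar u)
    (hcycle : ∃ ν : Finset V, ν.Nonempty ∧ ν.card ≤ eInd F ν) :
    ∀ ν : Finset V, 3 ≤ ν.card →
      ((eInd F ν : ℝ) - 1) / ((ν.card : ℝ) - 2) = m2 F → vstar ∈ ν := by
  have hsplit : ∀ μ : Finset V, (μ ∩ S).card + (μ ∩ T).card = μ.card := by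
    intro μ
    rw [← card_union_of_disjoint (hDisj.mono inter_subset_right inter_subset_right),
      ← inter_union_distrib_left, hUnion, inter_univ]
  set M : Set ℝ := {x : ℝ | ∃ ν : Finset V, 3 ≤ ν.card ∧
    x = ((eInd F ν : ℝ) - 1) / ((ν.card : ℝ) - 2)} with hMdef
  have hm2 : m2 F = sSup M := rfl
  have hfin : M.Finite := by
    apply Set.Finite.subset (Set.finite_range
      (fun ν : Finset V => ((eInd F ν : ℝ) - 1) / ((ν.card : ℝ) - 2)))
    rintro x ⟨ν, _, rfl⟩
    exact ⟨ν, rfl⟩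
  have hle : ∀ x ∈ M, x ≤ m2 F := fun x hx => le_csSup hfin.bddAbove hx
  -- m2 > 1
  obtain ⟨μ, hμne, hμe⟩ := hcycle
  have hμ3 : 3 ≤ μ.card := by
    by_contra h
    have hA := eInd_le_bip F S T hBip μ
    have hs := hsplit μ
    have h1 : 1 ≤ μ.card := hμne.card_pos
    have ha2 : (μ ∩ S).card ≤ 2 := by omega
    have hb2 : (μ ∩ T).card ≤ 2 := by omega
    interval_cases ha : (μ ∩ S).card <;> interval_cases hb : (μ ∩ T).card <;> omega
  have hm2gt : 1 < m2 F := by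
    refine lt_of_lt_of_le ?_ (hle _ ⟨μ, hμ3, rfl⟩)
    have hc3 : (3 : ℝ) ≤ (μ.card : ℝ) := by exact_mod_cast hμ3
    have he : (μ.card : ℝ) ≤ (eInd F μ : ℝ) := by exact_mod_cast hμe
    rw [lt_div_iff₀ (by linarith)]
    linarith
  intro ν hν3 hr
  by_contra hvν
  have hA := eInd_le_bip F S T hBip ν
  have hs := hsplit ν
  have hk2 : 2 ≤ (ν ∩ S).card := by
    by_contra hk
    push_neg at hk
    have he1 : eInd F ν + 1 ≤ ν.card := by
      interval_cases ha : (ν ∩ S).card <;> omega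
    have hc3 : (3 : ℝ) ≤ (ν.card : ℝ) := by exact_mod_cast hν3
    have he1' : (eInd F ν : ℝ) + 1 ≤ (ν.card : ℝ) := by exact_mod_cast he1
    have : ((eInd F ν : ℝ) - 1) / ((ν.card : ℝ) - 2) ≤ 1 := by
      rw [div_le_one (by linarith)]
      linarith
    rw [hr] at this
    linarith
  -- main case
  have hmle : (ν ∩ T).card ≤ ν.card - 2 := by omega
  have heub : eInd F ν ≤ (ν ∩ S).card * (ν.card - 2) :=
    le_trans hA (Nat.mul_le_mul_left _ hmle)
  have hB := eInd_insert_ge F S vstar hComp ν hvν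
  have hcard' : (insert vstar ν).card = ν.card + 1 := card_insert_of_notMem hvν
  have hmem : ((eInd F (insert vstar ν) : ℝ) - 1) / (((insert vstar ν).card : ℝ) - 2) ∈ M :=
    ⟨insert vstar ν, by omega, rfl⟩
  have hlex := hle _ hmem
  rw [← hr] at hlex
  rw [hcard'] at hlex
  -- real arithmetic contradiction
  set k := (ν ∩ S).card
  set n := ν.card
  set e := eInd F ν
  set e' := eInd F (insert vstar ν)
  have hc3 : (3 : ℝ) ≤ (n : ℝ) := by exact_mod_cast hν3
  have hk2' : (2 : ℝ) ≤ (k : ℝ) := by exact_mod_cast hk2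
  have hB' : (e : ℝ) + (k : ℝ) ≤ (e' : ℝ) := by exact_mod_cast hB
  have heub' : (e : ℝ) ≤ (k : ℝ) * ((n : ℝ) - 2) := by
    have := heub
    have h2n : 2 ≤ n := by omega
    have : (e : ℝ) ≤ ((k * (n - 2) : ℕ) : ℝ) := by exact_mod_cast this
    rwa [Nat.cast_mul, Nat.cast_sub h2n, Nat.cast_ofNat] at this
  have hkey : ((e : ℝ) - 1) / ((n : ℝ) - 2) < ((e' : ℝ) - 1) / (((n : ℝ) + 1) - 2) := by
    rw [div_lt_div_iff₀ (by linarith) (by linarith)]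
    nlinarith
  have : ((e' : ℝ) - 1) / (((n : ℝ) + 1) - 2) ≤ ((e : ℝ) - 1) / ((n : ℝ) - 2) := by
    convert hlex using 3
    push_cast
    ring
  linarith
end

section
/- Let F be r-semi-bounded with respect to (S, T, v*) and let ν ⊆ V(F) with e(F[ν]) ≥ 1. Then f(ν) ≥ e(F[ν]), where f(ν) = |S ∩ ν| + Σ_{v ∈ T∩ν} deg_F(v) − max{deg_F(v) : v ∈ T∩ν, deg_{F[ν]}(v) ≥ 1}. -/
open Finset

/-- The quantity `f(ν) = |S ∩ ν| + Σ_{v ∈ T ∩ ν} deg_F(v) -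
max{deg_F(v) : v ∈ T ∩ ν with a neighbour in ν}` for an `r`-semi-bounded graph `F`. -/
def fI {V : Type*} [Fintype V] [DecidableEq V] (F : SimpleGraph V) [DecidableRel F.Adj]
    (S T ν : Finset V) : ℤ :=
  ((S ∩ ν).card : ℤ) + ∑ v ∈ T ∩ ν, (F.degree v : ℤ)
    - (((T ∩ ν).filter (fun v => ∃ u ∈ ν, F.Adj v u)).sup (fun v => F.degree v) : ℕ)

/-- If `F` is `r`-semi-bounded with respect to `(S, T, v*)` and `ν ⊆ V(F)` has `e(F[ν]) ≥ 1`,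
then `f(ν) ≥ e(F[ν])`. -/
theorem stmt3 {V : Type*} [Fintype V] [DecidableEq V] (F : SimpleGraph V) [DecidableRel F.Adj]
    (S T : Finset V) (vstar : V) (r : ℕ)
    (hUnion : S ∪ T = Finset.univ) (hDisj : Disjoint S T)
    (hBip : ∀ u v, F.Adj u v → (u ∈ S ∧ v ∈ T) ∨ (u ∈ T ∧ v ∈ S))
    (hv : vstar ∈ T) (hComp : ∀ u ∈ S, F.Adj vstar u)
    (hDeg : ∀ v ∈ T, v ≠ vstar → F.degree v ≤ r)
    (ν : Finset V) (hν : 1 ≤ eInd F ν) :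
    (eInd F ν : ℤ) ≤ fI F S T ν := by
  classical
  set dν : V → ℕ := fun v => (ν.filter (F.Adj v)).card with hdν
  set A : Finset V := (T ∩ ν).filter (fun v => ∃ u ∈ ν, F.Adj v u) with hA
  -- not both endpoints of an edge in T
  have hST : ∀ x, x ∈ S → x ∈ T → False := fun x hs ht => Finset.disjoint_left.mp hDisj hs ht
  have hTT : ∀ a b, F.Adj a b → a ∈ T → b ∈ T → False := by
    intro a b hab ha hb
    rcases hBip a b hab with ⟨h1, h2⟩ | ⟨h1, h2⟩
    · exact hST a h1 ha
    · exact hST b h2 hb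
  -- edge decomposition
  have hE : F.edgeFinset.filter (fun e => ∀ v ∈ e, v ∈ ν)
      = (T ∩ ν).biUnion (fun v => (ν.filter (F.Adj v)).image (fun u => s(v, u))) := by
    ext e
    refine Sym2.ind (fun a b => ?_) e
    simp only [mem_filter, SimpleGraph.mem_edgeFinset, SimpleGraph.mem_edgeSet,
      Sym2.mem_iff, mem_biUnion, mem_image, mem_inter, forall_eq_or_imp, forall_eq]
    constructor
    · rintro ⟨hab, hmem⟩
      have haν : a ∈ ν := hmem.1
      have hbν : b ∈ ν := hmem.2
      rcases hBip a b hab with ⟨h1, h2⟩ | ⟨h1, h2⟩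
      · exact ⟨b, ⟨h2, hbν⟩, a, ⟨haν, hab.symm⟩, Sym2.eq_swap⟩
      · exact ⟨a, ⟨h1, haν⟩, b, ⟨hbν, hab⟩, rfl⟩
    · rintro ⟨v, ⟨hvT, hvν⟩, u, hu, heq⟩
      rw [Sym2.eq_iff] at heq
      rcases heq with ⟨rfl, rfl⟩ | ⟨rfl, rfl⟩
      · exact ⟨hu.2, hvν, hu.1⟩
      · exact ⟨hu.2.symm, hu.1, hvν⟩
  have hcard : eInd F ν = ∑ v ∈ T ∩ ν, dν v := by
    rw [eInd, hE, card_biUnion, ]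
    · refine Finset.sum_congr rfl fun v hv => ?_
      rw [card_image_of_injOn]
      intro x hx y hy hxy
      simp only [mem_coe, mem_filter] at hx hy
      rw [Sym2.eq_iff] at hxy
      rcases hxy with ⟨_, h⟩ | ⟨h1, h2⟩
      · exact h
      · exact (hx.2.ne' h2).elim
    · intro x hx y hy hxy
      rw [mem_coe, mem_inter] at hx hy
      simp only [Function.onFun, disjoint_left, mem_image, mem_filter]
      rintro e ⟨u, ⟨huν, hu⟩, rfl⟩ ⟨u', ⟨hu'ν, hu'⟩, heq⟩
      rw [Sym2.eq_iff] at heq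
      rcases heq with ⟨rfl, rfl⟩ | ⟨rfl, rfl⟩
      · exact hxy rfl
      · exact hTT _ _ hu' hy.1 hx.1
  -- restrict to A
  have hsumA : ∑ v ∈ T ∩ ν, dν v = ∑ v ∈ A, dν v := by
    rw [hA]
    refine (Finset.sum_filter_of_ne fun x hx hne => ?_).symm
    have : (ν.filter (F.Adj x)).Nonempty := card_pos.mp (Nat.pos_of_ne_zero hne)
    obtain ⟨u, hu⟩ := this
    rw [mem_filter] at hu
    exact ⟨u, hu.1, hu.2⟩
  -- A nonempty
  have hAne : A.Nonempty := by
    by_contra h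
    rw [not_nonempty_iff_eq_empty] at h
    rw [hcard, hsumA, h, Finset.sum_empty] at hν
    omega
  obtain ⟨w, hwA, hwmax⟩ := Finset.exists_mem_eq_sup A hAne (fun v => F.degree v)
  -- bounds
  have hb1 : dν w ≤ (S ∩ ν).card := by
    apply card_le_card
    intro u hu
    rw [mem_filter] at hu
    rw [mem_inter]
    have hwT : w ∈ T := (mem_inter.mp (mem_filter.mp hwA).1).1
    rcases hBip w u hu.2 with ⟨h1, _⟩ | ⟨_, h2⟩
    · exact (hST w h1 hwT).elim
    · exact ⟨h2, hu.1⟩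
  have hb2 : ∀ v, dν v ≤ F.degree v := fun v => by
    rw [← SimpleGraph.card_neighborFinset_eq_degree]
    apply card_le_card
    intro u hu
    rw [mem_filter] at hu
    rw [SimpleGraph.mem_neighborFinset]
    exact hu.2
  have hAsub : A ⊆ T ∩ ν := filter_subset _ _
  have hkey : eInd F ν + F.degree w ≤ (S ∩ ν).card + ∑ v ∈ T ∩ ν, F.degree v := by
    rw [hcard, hsumA, ← Finset.add_sum_erase A dν hwA]
    have h3 : ∑ v ∈ A.erase w, dν v ≤ ∑ v ∈ A.erase w, F.degree v :=
      Finset.sum_le_sum fun v _ => hb2 v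
    have h4 : F.degree w + ∑ v ∈ A.erase w, F.degree v = ∑ v ∈ A, F.degree v := by
      simpa using Finset.add_sum_erase A (fun v => F.degree v) hwA
    have h5 : ∑ v ∈ A, F.degree v ≤ ∑ v ∈ T ∩ ν, F.degree v :=
      Finset.sum_le_sum_of_subset hAsub
    omega
  rw [fI, ← hA, hwmax]
  have hc : ((eInd F ν : ℕ) : ℤ) + (F.degree w : ℤ) ≤ ((S ∩ ν).card : ℤ) + ∑ v ∈ T ∩ ν, (F.degree v : ℤ) := by
    rw [← Nat.cast_sum]
    exact_mod_cast hkey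
  linarith
end

section
/- Let F be r-semi-bounded with respect to (S, T, v*) and let ν ⊆ V(F) with e(F[ν]) ≥ 1 and S ∪ {v*} ⊆ ν. Then f(ν) = e(F[ν]). -/
open Finset

/-- If `F` is `r`-semi-bounded with respect to `(S, T, v*)`, `ν ⊆ V(F)` has `e(F[ν]) ≥ 1`,
and `S ∪ {v*} ⊆ ν`, then `f(ν) = e(F[ν])`. -/
theorem stmt4 {V : Type*} [Fintype V] [DecidableEq V] (F : SimpleGraph V) [DecidableRel F.Adj]
    (S T : Finset V) (vstar : V) (r : ℕ)
    (hUnion : S ∪ T = Finset.univ) (hDisj : Disjoint S T)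
    (hBip : ∀ u v, F.Adj u v → (u ∈ S ∧ v ∈ T) ∨ (u ∈ T ∧ v ∈ S))
    (hv : vstar ∈ T) (hComp : ∀ u ∈ S, F.Adj vstar u)
    (hDeg : ∀ v ∈ T, v ≠ vstar → F.degree v ≤ r)
    (ν : Finset V) (hν : 1 ≤ eInd F ν) (hSub : insert vstar S ⊆ ν) :
    fI F S T ν = (eInd F ν : ℤ) := by

  classical
  have hSν : S ⊆ ν := fun x hx => hSub (Finset.mem_insert_of_mem hx)
  have hvν : vstar ∈ ν := hSub (Finset.mem_insert_self _ _)
  have hNb : ∀ v ∈ T, ∀ u, F.Adj v u → u ∈ S := by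
    intro v hv' u hadj
    rcases hBip v u hadj with ⟨h1, _⟩ | ⟨_, h2⟩
    · exact absurd hv' (Finset.disjoint_left.mp hDisj h1)
    · exact h2
  have hdegS : ∀ v ∈ T, F.degree v ≤ S.card := by
    intro v hv'
    rw [← SimpleGraph.card_neighborFinset_eq_degree]
    exact Finset.card_le_card
      (fun u hu => hNb v hv' u ((SimpleGraph.mem_neighborFinset _ _ _).mp hu))
  have hdegv : F.degree vstar = S.card := by
    rw [← SimpleGraph.card_neighborFinset_eq_degree]
    congr 1
    apply Finset.Subset.antisymm
    · exact fun u hu => hNb vstar hv u ((SimpleGraph.mem_neighborFinset _ _ _).mp hu)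
    · exact fun u hu => (SimpleGraph.mem_neighborFinset _ _ _).mpr (hComp u hu)
  -- S is nonempty
  have hS : S.Nonempty := by
    obtain ⟨e, he⟩ := Finset.card_pos.mp hν
    rw [Finset.mem_filter] at he
    obtain ⟨he1, _⟩ := he
    induction e using Sym2.ind with
    | _ a b =>
      have hadj : F.Adj a b := (SimpleGraph.mem_edgeFinset.mp he1)
      rcases hBip a b hadj with ⟨h1, _⟩ | ⟨_, h2⟩
      · exact ⟨a, h1⟩
      · exact ⟨b, h2⟩
  obtain ⟨s0, hs0⟩ := hS
  -- vstar is in the filtered set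
  have hvmem : vstar ∈ (T ∩ ν).filter (fun v => ∃ u ∈ ν, F.Adj v u) := by
    rw [Finset.mem_filter, Finset.mem_inter]
    exact ⟨⟨hv, hvν⟩, s0, hSν hs0, hComp s0 hs0⟩
  -- the sup equals |S|
  have hsup : ((T ∩ ν).filter (fun v => ∃ u ∈ ν, F.Adj v u)).sup (fun v => F.degree v)
      = S.card := by
    apply le_antisymm
    · apply Finset.sup_le
      intro v hvf
      rw [Finset.mem_filter, Finset.mem_inter] at hvf
      exact hdegS v hvf.1.1
    · calc S.card = F.degree vstar := hdegv.symm
        _ ≤ _ := Finset.le_sup (f := fun v => F.degree v) hvmem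
  -- edge count
  have hE : F.edgeFinset.filter (fun e => ∀ v ∈ e, v ∈ ν)
      = (T ∩ ν).biUnion (fun v => F.incidenceFinset v) := by
    ext e
    induction e using Sym2.ind with
    | _ a b =>
      simp only [Finset.mem_filter, Finset.mem_biUnion, Finset.mem_inter,
        SimpleGraph.mem_incidenceFinset, SimpleGraph.mk'_mem_incidenceSet_iff,
        SimpleGraph.mem_edgeFinset, SimpleGraph.mem_edgeSet, Sym2.mem_iff]
      constructor
      · rintro ⟨hadj, hballs⟩
        rcases hBip a b hadj with ⟨h1, h2⟩ | ⟨h1, h2⟩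
        · exact ⟨b, ⟨h2, hballs b (Or.inr rfl)⟩, hadj, Or.inr rfl⟩
        · exact ⟨a, ⟨h1, hballs a (Or.inl rfl)⟩, hadj, Or.inl rfl⟩
      · rintro ⟨v, ⟨hvT, hvν'⟩, hadj, (rfl | rfl)⟩
        · refine ⟨hadj, ?_⟩
          intro x hx
          rcases hx with rfl | rfl
          · exact hvν'
          · exact hSν (hNb _ hvT _ hadj)
        · refine ⟨hadj, ?_⟩
          intro x hx
          rcases hx with rfl | rfl
          · exact hSν (hNb _ hvT _ hadj.symm)
          · exact hvν'
  have hcount : eInd F ν = ∑ v ∈ T ∩ ν, F.degree v := by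
    rw [eInd, hE, Finset.card_biUnion]
    · exact Finset.sum_congr rfl fun v _ => F.card_incidenceFinset_eq_degree v
    · intro x hx y hy hxy
      rw [Finset.mem_coe, Finset.mem_inter] at hx hy
      simp only [Function.onFun, Finset.disjoint_left]
      intro e he1 he2
      rw [SimpleGraph.mem_incidenceFinset] at he1 he2
      induction e using Sym2.ind with
      | _ a b =>
        have hadj : F.Adj a b := he1.1
        have hx' : x = a ∨ x = b := Sym2.mem_iff.mp he1.2
        have hy' : y = a ∨ y = b := Sym2.mem_iff.mp he2.2
        have : F.Adj x y ∨ F.Adj y x := by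
          rcases hx' with rfl | rfl <;> rcases hy' with rfl | rfl
          · exact absurd rfl hxy
          · exact Or.inl hadj
          · exact Or.inr hadj
          · exact absurd rfl hxy
        rcases this with h | h
        · exact absurd (hNb x hx.1 y h) (Finset.disjoint_left.mp hDisj · hy.1)
        · exact absurd (hNb y hy.1 x h) (Finset.disjoint_left.mp hDisj · hx.1)
  have hSint : S ∩ ν = S := Finset.inter_eq_left.mpr hSν
  rw [fI, hsup, hSint, hcount]
  push_cast
  ring
end

section
/- Let F be r-semi-bounded with respect to (S, T, v*). For every ν ⊆ V(F) with e(F[ν]) ≥ 1 we have f(ν) ≤ −(r−1)(|S ∩ ν| − 1) + r(|ν| − 2) + 1. -/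
open Finset

/-- If `F` is `r`-semi-bounded with respect to `(S, T, v*)` and `ν ⊆ V(F)` has `e(F[ν]) ≥ 1`,
then `f(ν) ≤ -(r-1)(|S ∩ ν| - 1) + r(|ν| - 2) + 1`. -/
theorem stmt6 {V : Type*} [Fintype V] [DecidableEq V] (F : SimpleGraph V) [DecidableRel F.Adj]
    (S T : Finset V) (vstar : V) (r : ℕ)
    (hUnion : S ∪ T = Finset.univ) (hDisj : Disjoint S T)
    (hBip : ∀ u v, F.Adj u v → (u ∈ S ∧ v ∈ T) ∨ (u ∈ T ∧ v ∈ S))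
    (hv : vstar ∈ T) (hComp : ∀ u ∈ S, F.Adj vstar u)
    (hDeg : ∀ v ∈ T, v ≠ vstar → F.degree v ≤ r)
    (ν : Finset V) (hν : 1 ≤ eInd F ν) :
    fI F S T ν ≤ -((r : ℤ) - 1) * (((S ∩ ν).card : ℤ) - 1) + (r : ℤ) * ((ν.card : ℤ) - 2) + 1 := by
  classical
  obtain ⟨e, he⟩ := Finset.card_pos.mp hν
  rw [Finset.mem_filter] at he
  obtain ⟨he1, he2⟩ := he
  rw [SimpleGraph.mem_edgeFinset] at he1
  induction e using Sym2.ind with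
  | _ a b =>
  rw [SimpleGraph.mem_edgeSet] at he1
  have ha := he2 a (Sym2.mem_mk_left a b)
  have hb := he2 b (Sym2.mem_mk_right a b)
  obtain ⟨u, w0, huS, huν, hw0T, hw0ν, hadj⟩ :
      ∃ u w0, u ∈ S ∧ u ∈ ν ∧ w0 ∈ T ∧ w0 ∈ ν ∧ F.Adj w0 u := by
    rcases hBip a b he1 with ⟨hS, hT⟩ | ⟨hT, hS⟩
    · exact ⟨a, b, hS, ha, hT, hb, he1.symm⟩
    · exact ⟨b, a, hS, hb, hT, ha, he1⟩
  set w := if vstar ∈ ν then vstar else w0 with hw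
  have hwA : w ∈ (T ∩ ν).filter (fun v => ∃ u ∈ ν, F.Adj v u) := by
    by_cases h : vstar ∈ ν
    · rw [hw, if_pos h]
      exact Finset.mem_filter.mpr ⟨Finset.mem_inter.mpr ⟨hv, h⟩, u, huν, hComp u huS⟩
    · rw [hw, if_neg h]
      exact Finset.mem_filter.mpr ⟨Finset.mem_inter.mpr ⟨hw0T, hw0ν⟩, u, huν, hadj⟩
  have hwT : w ∈ T ∩ ν := (Finset.mem_filter.mp hwA).1
  have hothers : ∀ v ∈ (T ∩ ν).erase w, F.degree v ≤ r := by
    intro v hv'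
    obtain ⟨hne, hvT⟩ := Finset.mem_erase.mp hv'
    rw [Finset.mem_inter] at hvT
    refine hDeg v hvT.1 fun hcon => ?_
    by_cases h : vstar ∈ ν
    · exact hne (show v = w by rw [hcon, hw, if_pos h])
    · exact h (hcon ▸ hvT.2)
  have hpos : 1 ≤ (T ∩ ν).card := Finset.card_pos.mpr ⟨w, hwT⟩
  have hsum : ∑ v ∈ T ∩ ν, (F.degree v : ℤ)
      ≤ (F.degree w : ℤ) + (r : ℤ) * (((T ∩ ν).card : ℤ) - 1) := by
    rw [← Finset.add_sum_erase _ _ hwT]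
    have h1 : ∑ v ∈ (T ∩ ν).erase w, (F.degree v : ℤ) ≤ ((T ∩ ν).erase w).card • (r : ℤ) :=
      Finset.sum_le_card_nsmul _ _ _ (fun v hv' => by exact_mod_cast hothers v hv')
    rw [Finset.card_erase_of_mem hwT, nsmul_eq_mul, Nat.cast_sub hpos] at h1
    push_cast at h1 ⊢
    linarith
  have hdegw : (F.degree w : ℤ)
      ≤ ((((T ∩ ν).filter (fun v => ∃ u ∈ ν, F.Adj v u)).sup (fun v => F.degree v) : ℕ) : ℤ) := by
    exact_mod_cast Finset.le_sup (f := fun v => F.degree v) hwA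
  have hcard : (ν.card : ℤ) = ((S ∩ ν).card : ℤ) + ((T ∩ ν).card : ℤ) := by
    have h1 : (S ∩ ν) ∪ (T ∩ ν) = ν := by
      rw [← Finset.union_inter_distrib_right, hUnion, Finset.univ_inter]
    have h2 : Disjoint (S ∩ ν) (T ∩ ν) :=
      hDisj.mono (Finset.inter_subset_left) (Finset.inter_subset_left)
    have h3 : ν.card = (S ∩ ν).card + (T ∩ ν).card := by
      rw [← Finset.card_union_of_disjoint h2, h1]
    exact_mod_cast congrArg (Nat.cast : ℕ → ℤ) h3
  unfold fI
  rw [hcard]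
  have key : -((r : ℤ) - 1) * (((S ∩ ν).card : ℤ) - 1)
      + (r : ℤ) * ((((S ∩ ν).card : ℤ) + ((T ∩ ν).card : ℤ)) - 2) + 1
      = ((S ∩ ν).card : ℤ) + (r : ℤ) * (((T ∩ ν).card : ℤ) - 1) := by ring
  linarith
end

section
/- Let F be r-semi-bounded with respect to (S, T, v*) and let ν ⊆ V(F) with e(F[ν]) ≥ 1. If there exists a vertex in (T ∩ ν) \ {v*} that is not incident to every edge of F[ν], then there exists v ∈ (T ∩ ν) \ {v*} with e(F[ν \ {v}]) ≥ 1 and f(ν) − f(ν \ {v}) = deg_F(v). -/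
open Finset

lemma eInd_pos {V : Type*} [Fintype V] [DecidableEq V] (F : SimpleGraph V) [DecidableRel F.Adj]
    {μ : Finset V} {x y : V} (hxy : F.Adj x y) (hx : x ∈ μ) (hy : y ∈ μ) :
    1 ≤ eInd F μ := by
  rw [eInd, Nat.one_le_iff_ne_zero, ← Nat.pos_iff_ne_zero, Finset.card_pos]
  refine ⟨s(x, y), Finset.mem_filter.2 ⟨SimpleGraph.mem_edgeFinset.2 hxy, ?_⟩⟩
  intro z hz
  rcases Sym2.mem_iff.1 hz with rfl | rfl <;> assumption

lemma sup_erase_eq {V : Type*} [DecidableEq V] (Q : Finset V) (g : V → ℕ) (v m : V)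
    (hm : m ∈ Q.erase v) (hvm : g v ≤ g m) :
    (Q.erase v).sup g = Q.sup g := by
  refine le_antisymm (Finset.sup_mono (Finset.erase_subset _ _)) (Finset.sup_le ?_)
  intro u hu
  by_cases huv : u = v
  · exact le_trans (huv ▸ hvm) (Finset.le_sup hm)
  · exact Finset.le_sup (Finset.mem_erase.2 ⟨huv, hu⟩)

/-- The key computation: if `v ∈ T ∩ ν`, neighbours of `T`-vertices lie in `S`,
`S` and `T` are disjoint, and the relevant sup is unchanged by erasing `v`,
then `fI` drops by exactly `deg v`. -/
lemma fI_erase {V : Type*} [Fintype V] [DecidableEq V] (F : SimpleGraph V) [DecidableRel F.Adj]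
    (S T ν : Finset V) (v : V) (hvT : v ∈ T) (hvν : v ∈ ν)
    (hDisj : Disjoint S T)
    (hsup : (((T ∩ ν.erase v).filter (fun x => ∃ u ∈ ν.erase v, F.Adj x u)).sup
        (fun x => F.degree x))
      = (((T ∩ ν).filter (fun x => ∃ u ∈ ν, F.Adj x u)).sup (fun x => F.degree x)) ) :
    fI F S T ν - fI F S T (ν.erase v) = (F.degree v : ℤ) := by
  have hvS : v ∉ S := fun h => (Finset.disjoint_left.1 hDisj h) hvT
  have hS : S ∩ ν.erase v = S ∩ ν := by
    ext x
    simp only [Finset.mem_inter, Finset.mem_erase]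
    constructor
    · rintro ⟨hxS, _, hxν⟩; exact ⟨hxS, hxν⟩
    · rintro ⟨hxS, hxν⟩
      exact ⟨hxS, fun h => hvS (h ▸ hxS), hxν⟩
  have hT : T ∩ ν.erase v = (T ∩ ν).erase v := by
    ext x
    simp only [Finset.mem_inter, Finset.mem_erase]
    tauto
  have hsum : ∑ x ∈ (T ∩ ν).erase v, (F.degree x : ℤ) + (F.degree v : ℤ)
      = ∑ x ∈ T ∩ ν, (F.degree x : ℤ) :=
    Finset.sum_erase_add _ _ (Finset.mem_inter.2 ⟨hvT, hvν⟩)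
  rw [hT] at hsup
  rw [fI, fI, hS, hT, hsup, ← hsum]
  ring

/-- If `F` is `r`-semi-bounded with respect to `(S, T, v*)`, `ν ⊆ V(F)` has `e(F[ν]) ≥ 1`,
and some vertex of `(T ∩ ν) \ {v*}` is not incident to every edge of `F[ν]`, then there is
`v ∈ (T ∩ ν) \ {v*}` with `e(F[ν \ {v}]) ≥ 1` and `f(ν) - f(ν \ {v}) = deg_F(v)`. -/
theorem stmt9 {V : Type*} [Fintype V] [DecidableEq V] (F : SimpleGraph V) [DecidableRel F.Adj]
    (S T : Finset V) (vstar : V) (r : ℕ)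
    (hUnion : S ∪ T = Finset.univ) (hDisj : Disjoint S T)
    (hBip : ∀ u v, F.Adj u v → (u ∈ S ∧ v ∈ T) ∨ (u ∈ T ∧ v ∈ S))
    (hv : vstar ∈ T) (hComp : ∀ u ∈ S, F.Adj vstar u)
    (hDeg : ∀ v ∈ T, v ≠ vstar → F.degree v ≤ r)
    (ν : Finset V) (hν : 1 ≤ eInd F ν)
    (hex : ∃ w ∈ T ∩ ν, w ≠ vstar ∧ ∃ a ∈ ν, ∃ b ∈ ν, F.Adj a b ∧ w ≠ a ∧ w ≠ b) :
    ∃ v ∈ T ∩ ν, v ≠ vstar ∧ 1 ≤ eInd F (ν.erase v) ∧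
      fI F S T ν - fI F S T (ν.erase v) = (F.degree v : ℤ) := by
  classical
  obtain ⟨w, hwTν, hwv, a, ha, b, hb, hab, hwa, hwb⟩ := hex
  obtain ⟨hwT, hwνmem⟩ := Finset.mem_inter.1 hwTν
  -- neighbours of T-vertices lie in S
  have hTS : ∀ x ∈ T, ∀ u, F.Adj x u → u ∈ S := by
    intro x hxT u hxu
    rcases hBip x u hxu with ⟨hxS, _⟩ | ⟨_, huS⟩
    · exact absurd hxT (Finset.disjoint_left.1 hDisj hxS)
    · exact huS
  -- degree of vstar dominates degrees of T-vertices
  have hdegstar : ∀ x ∈ T, F.degree x ≤ F.degree vstar := by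
    intro x hxT
    apply Finset.card_le_card
    intro u hu
    rw [SimpleGraph.mem_neighborFinset] at hu ⊢
    exact hComp u (hTS x hxT u hu)
  -- extract the T-endpoint t and S-endpoint s of the edge ab
  obtain ⟨t, s, htT, hsS, hts, htν, hsν, hwt⟩ :
      ∃ t s, t ∈ T ∧ s ∈ S ∧ F.Adj t s ∧ t ∈ ν ∧ s ∈ ν ∧ w ≠ t := by
    rcases hBip a b hab with ⟨haS, hbT⟩ | ⟨haT, hbS⟩
    · exact ⟨b, a, hbT, haS, hab.symm, hb, ha, hwb⟩
    · exact ⟨a, b, haT, hbS, hab, ha, hb, hwa⟩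
  set Q : Finset V := (T ∩ ν).filter (fun x => ∃ u ∈ ν, F.Adj x u) with hQ
  have htQ : t ∈ Q := Finset.mem_filter.2 ⟨Finset.mem_inter.2 ⟨htT, htν⟩, s, hsν, hts⟩
  -- the filter over ν.erase v equals Q.erase v, for v ∈ T
  have hQerase : ∀ v ∈ T,
      (T ∩ ν.erase v).filter (fun x => ∃ u ∈ ν.erase v, F.Adj x u) = Q.erase v := by
    intro v hvT
    ext x
    simp only [hQ, Finset.mem_filter, Finset.mem_inter, Finset.mem_erase]
    constructor
    · rintro ⟨⟨hxT, hxv, hxν⟩, u, ⟨huv, huν⟩, hadj⟩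
      exact ⟨hxv, ⟨hxT, hxν⟩, u, huν, hadj⟩
    · rintro ⟨hxv, ⟨hxT, hxν⟩, u, huν, hadj⟩
      have huS : u ∈ S := hTS x hxT u hadj
      have huv : u ≠ v := fun h => (Finset.disjoint_left.1 hDisj huS) (h ▸ hvT)
      exact ⟨⟨hxT, hxv, hxν⟩, u, ⟨huv, huν⟩, hadj⟩
  by_cases hwQ : w ∈ Q
  · by_cases hm : ∃ m ∈ Q.erase w, F.degree w ≤ F.degree m
    · -- choose v = w; sup unchanged
      obtain ⟨m, hmQ, hdm⟩ := hm
      refine ⟨w, hwTν, hwv, ?_, ?_⟩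
      · refine eInd_pos F hts (Finset.mem_erase.2 ⟨Ne.symm hwt, htν⟩)
          (Finset.mem_erase.2 ⟨?_, hsν⟩)
        intro h
        exact (Finset.disjoint_left.1 hDisj (h ▸ hsS)) hwT
      · refine fI_erase F S T ν w hwT hwνmem hDisj ?_
        rw [hQerase w hwT]
        exact sup_erase_eq Q _ w m hmQ hdm
    · -- every other element of Q has smaller degree; choose v = t
      push_neg at hm
      have htw : t ∈ Q.erase w := Finset.mem_erase.2 ⟨fun h => hwt h.symm, htQ⟩
      have hlt : F.degree t < F.degree w := hm t htw
      have htvstar : t ≠ vstar := by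
        rintro rfl
        exact absurd (hdegstar w hwT) (not_le.2 hlt)
      -- w has a neighbour s' ∈ ν (necessarily in S)
      obtain ⟨-, s', hs'ν, hws'⟩ := Finset.mem_filter.1 hwQ
      have hs'S : s' ∈ S := hTS w hwT s' hws'
      have hs't : s' ≠ t := fun h => (Finset.disjoint_left.1 hDisj hs'S) (h ▸ htT)
      refine ⟨t, Finset.mem_inter.2 ⟨htT, htν⟩, htvstar, ?_, ?_⟩
      · exact eInd_pos F hws' (Finset.mem_erase.2 ⟨hwt, hwνmem⟩)
          (Finset.mem_erase.2 ⟨hs't, hs'ν⟩)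
      · refine fI_erase F S T ν t htT htν hDisj ?_
        rw [hQerase t htT]
        exact sup_erase_eq Q _ t w (Finset.mem_erase.2 ⟨hwt, hwQ⟩) hlt.le
  · -- w not in Q: erasing w does not change Q at all
    refine ⟨w, hwTν, hwv, ?_, ?_⟩
    · refine eInd_pos F hts (Finset.mem_erase.2 ⟨Ne.symm hwt, htν⟩)
        (Finset.mem_erase.2 ⟨?_, hsν⟩)
      intro h
      exact (Finset.disjoint_left.1 hDisj (h ▸ hsS)) hwT
    · refine fI_erase F S T ν w hwT hwνmem hDisj ?_
      rw [hQerase w hwT, Finset.erase_eq_of_notMem hwQ]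
end

section
/- Let F be r-semi-bounded with respect to (S, T, v*) and suppose F contains a cycle. Then the set ν = S ∪ {v*} satisfies f(ν) − 1 < r(e(F[ν]) − 1), i.e., ν ∈ A_F, and moreover a(ν) = (r(|ν|−2)+1−f(ν))/(r(e(F[ν])−1)+1−f(ν)) = 1; consequently A_F ≠ ∅ and a(F) ≤ 1. -/
open Finset

private lemma key_count {V : Type*} [Fintype V] [DecidableEq V] (F : SimpleGraph V)
    [DecidableRel F.Adj] (S T : Finset V) (vstar : V) (r : ℕ)
    (hUnion : S ∪ T = Finset.univ) (hDisj : Disjoint S T)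
    (hBip : ∀ u v, F.Adj u v → (u ∈ S ∧ v ∈ T) ∨ (u ∈ T ∧ v ∈ S))
    (hv : vstar ∈ T)
    (hDeg : ∀ v ∈ T, v ≠ vstar → F.degree v ≤ r)
    (hcycle : ∃ ν : Finset V, ν.Nonempty ∧ ν.card ≤ eInd F ν) :
    2 ≤ r ∧ 2 ≤ S.card := by
  classical
  obtain ⟨ν, hne, hle⟩ := hcycle
  set P : Finset (V × V) := ((S ∩ ν) ×ˢ (T ∩ ν)).filter (fun x => F.Adj x.1 x.2) with hPdef
  have hmemP : ∀ x ∈ P, x.1 ∈ S ∩ ν ∧ x.2 ∈ T ∩ ν ∧ F.Adj x.1 x.2 := by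
    intro x hx
    simp only [hPdef, mem_filter, mem_product] at hx
    tauto
  have hcard : ν.card = (S ∩ ν).card + (T ∩ ν).card := by
    rw [← card_union_of_disjoint (hDisj.mono inter_subset_left inter_subset_left),
      ← union_inter_distrib_right, hUnion, univ_inter]
  -- e(ν) ≤ |P|
  have h1 : eInd F ν ≤ P.card := by
    apply card_le_card_of_surjOn (fun x : V × V => s(x.1, x.2))
    intro e he
    simp only [coe_filter, Set.mem_setOf_eq, SimpleGraph.mem_edgeFinset] at he
    induction e with
    | _ a b =>
      obtain ⟨hadj, hmem⟩ := he
      have ha : a ∈ ν := hmem a (Sym2.mem_mk_left a b)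
      have hb : b ∈ ν := hmem b (Sym2.mem_mk_right a b)
      rcases hBip a b hadj with ⟨haS, hbT⟩ | ⟨haT, hbS⟩
      · exact ⟨(a, b), by
          simp only [hPdef, coe_filter, Set.mem_setOf_eq, mem_product, mem_inter]
          exact ⟨⟨⟨haS, ha⟩, hbT, hb⟩, hadj⟩, rfl⟩
      · exact ⟨(b, a), by
          simp only [hPdef, coe_filter, Set.mem_setOf_eq, mem_product, mem_inter]
          exact ⟨⟨⟨hbS, hb⟩, haT, ha⟩, hadj.symm⟩, Sym2.eq_swap⟩
  have hfib : P.card = ∑ v ∈ T ∩ ν, (P.filter (fun x => x.2 = v)).card :=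
    card_eq_sum_card_fiberwise (fun x hx => (hmemP x hx).2.1)
  have hfibS : ∀ v : V, (P.filter (fun x => x.2 = v)).card ≤ (S ∩ ν).card := by
    intro v
    apply card_le_card_of_injOn Prod.fst
    · intro x hx
      exact (hmemP x (mem_filter.mp hx).1).1
    · intro x hx y hy hxy
      simp only [coe_filter, Set.mem_setOf_eq] at hx hy
      exact Prod.ext hxy (hx.2.trans hy.2.symm)
  have hfibr : ∀ v ∈ T ∩ ν, v ≠ vstar → (P.filter (fun x => x.2 = v)).card ≤ r := by
    intro v hvT hne'
    have h2 : (P.filter (fun x => x.2 = v)).card ≤ (F.neighborFinset v).card := by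
      apply card_le_card_of_injOn Prod.fst
      · intro x hx
        have hx' := mem_filter.mp hx
        have := (hmemP x hx'.1).2.2
        rw [Finset.mem_coe, SimpleGraph.mem_neighborFinset, ← hx'.2]
        exact this.symm
      · intro x hx y hy hxy
        simp only [coe_filter, Set.mem_setOf_eq] at hx hy
        exact Prod.ext hxy (hx.2.trans hy.2.symm)
    calc (P.filter (fun x => x.2 = v)).card ≤ (F.neighborFinset v).card := h2
      _ = F.degree v := F.card_neighborFinset_eq_degree v
      _ ≤ r := hDeg v (mem_inter.mp hvT).1 hne'
  have hst : ν.card ≤ (S ∩ ν).card * (T ∩ ν).card :=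
    hle.trans (h1.trans ((card_filter_le _ _).trans_eq (card_product _ _)))
  have hν1 : 1 ≤ ν.card := card_pos.mpr hne
  have hs2 : 2 ≤ (S ∩ ν).card := by nlinarith [hst, hcard, hν1]
  refine ⟨?_, hs2.trans (card_le_card inter_subset_left)⟩
  by_contra hr
  push_neg at hr
  have hr1 : r ≤ 1 := by omega
  by_cases hvν : vstar ∈ ν
  · have hvTν : vstar ∈ T ∩ ν := mem_inter.mpr ⟨hv, hvν⟩
    have hsplit : T ∩ ν = insert vstar ((T ∩ ν).erase vstar) := (insert_erase hvTν).symm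
    have hsum : ∑ v ∈ T ∩ ν, (P.filter (fun x => x.2 = v)).card
        ≤ (S ∩ ν).card + ((T ∩ ν).card - 1) * 1 := by
      rw [hsplit, sum_insert (notMem_erase _ _)]
      gcongr
      · exact hfibS vstar
      · calc ∑ v ∈ (T ∩ ν).erase vstar, (P.filter (fun x => x.2 = v)).card
            ≤ ∑ v ∈ (T ∩ ν).erase vstar, 1 := by
              apply sum_le_sum
              intro v hv'
              exact ((hfibr v (mem_of_mem_erase hv') (ne_of_mem_erase hv')).trans hr1)
          _ = ((T ∩ ν).erase vstar).card := by simp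
          _ = (T ∩ ν).card - 1 := by rw [card_erase_of_mem hvTν]
          _ = ((T ∩ ν).card - 1) * 1 := by ring
          _ = ((insert vstar ((T ∩ ν).erase vstar)).card - 1) * 1 := by rw [← hsplit]
    have ht1 : 1 ≤ (T ∩ ν).card := card_pos.mpr ⟨vstar, hvTν⟩
    have : ν.card ≤ (S ∩ ν).card + ((T ∩ ν).card - 1) * 1 :=
      hle.trans (h1.trans (hfib.le.trans hsum))
    omega
  · have hsum : ∑ v ∈ T ∩ ν, (P.filter (fun x => x.2 = v)).card ≤ (T ∩ ν).card * 1 := by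
      apply sum_le_card_nsmul
      intro v hv'
      have : v ≠ vstar := fun h => hvν (h ▸ (mem_inter.mp hv').2)
      exact (hfibr v hv' this).trans hr1
    have : ν.card ≤ (T ∩ ν).card * 1 := hle.trans (h1.trans (hfib.le.trans hsum))
    omega

/-- If `F` is `r`-semi-bounded with respect to `(S, T, v*)` and contains a cycle, then
`ν = S ∪ {v*}` lies in `A_F` (it has minimum induced degree at least 1 and
`f(ν) - 1 < r(e(F[ν]) - 1)`) and satisfies `a(ν) = 1`; in particular `A_F ≠ ∅` and `a(F) ≤ 1`. -/
theorem stmt10 {V : Type*} [Fintype V] [DecidableEq V] (F : SimpleGraph V) [DecidableRel F.Adj]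
    (S T : Finset V) (vstar : V) (r : ℕ)
    (hUnion : S ∪ T = Finset.univ) (hDisj : Disjoint S T)
    (hBip : ∀ u v, F.Adj u v → (u ∈ S ∧ v ∈ T) ∨ (u ∈ T ∧ v ∈ S))
    (hv : vstar ∈ T) (hComp : ∀ u ∈ S, F.Adj vstar u)
    (hDeg : ∀ v ∈ T, v ≠ vstar → F.degree v ≤ r)
    (hcycle : ∃ ν : Finset V, ν.Nonempty ∧ ν.card ≤ eInd F ν) :
    (∀ w ∈ insert vstar S, ∃ u ∈ insert vstar S, F.Adj w u) ∧
    fI F S T (insert vstar S) - 1 < (r : ℤ) * ((eInd F (insert vstar S) : ℤ) - 1) ∧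
    ((r : ℚ) * (((insert vstar S).card : ℚ) - 2) + 1 - (fI F S T (insert vstar S) : ℚ)) /
        ((r : ℚ) * ((eInd F (insert vstar S) : ℚ) - 1) + 1 - (fI F S T (insert vstar S) : ℚ))
      = 1 := by
  obtain ⟨hr2, hS2⟩ := key_count F S T vstar r hUnion hDisj hBip hv hDeg hcycle
  have hvS : vstar ∉ S := fun h => disjoint_left.mp hDisj h hv
  have hSne : S.Nonempty := card_pos.mp (by omega)
  obtain ⟨u0, hu0⟩ := hSne
  have hSint : S ∩ insert vstar S = S := inter_eq_left.mpr (subset_insert _ _)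
  have hTint : T ∩ insert vstar S = {vstar} := by
    ext x
    simp only [mem_inter, mem_insert, mem_singleton]
    constructor
    · rintro ⟨hxT, rfl | hxS⟩
      · rfl
      · exact absurd hxT (disjoint_left.mp hDisj hxS)
    · rintro rfl
      exact ⟨hv, Or.inl rfl⟩
  have hfI : fI F S T (insert vstar S) = S.card := by
    rw [fI, hSint, hTint]
    have hfil : ({vstar} : Finset V).filter (fun v => ∃ u ∈ insert vstar S, F.Adj v u)
        = {vstar} := by
      rw [filter_singleton, if_pos ⟨u0, mem_insert_of_mem hu0, hComp u0 hu0⟩]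
    rw [hfil, sum_singleton, sup_singleton]
    ring
  have heInd : eInd F (insert vstar S) = S.card := by
    rw [eInd]
    symm
    apply card_bij (fun u _ => s(vstar, u))
    · intro u hu
      simp only [mem_filter, SimpleGraph.mem_edgeFinset]
      refine ⟨hComp u hu, fun v hv' => ?_⟩
      rw [Sym2.mem_iff] at hv'
      rcases hv' with rfl | rfl
      · exact mem_insert_self _ _
      · exact mem_insert_of_mem hu
    · intro a _ b _ h
      exact Sym2.congr_right.mp h
    · intro e he
      simp only [mem_filter, SimpleGraph.mem_edgeFinset] at he
      induction e with
      | _ a b =>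
        obtain ⟨hadj, hmem⟩ := he
        have ha : a ∈ insert vstar S := hmem a (Sym2.mem_mk_left a b)
        have hb : b ∈ insert vstar S := hmem b (Sym2.mem_mk_right a b)
        rcases hBip a b hadj with ⟨haS, hbT⟩ | ⟨haT, hbS⟩
        · have hb' : b = vstar := by
            rcases mem_insert.mp hb with h | h
            · exact h
            · exact absurd hbT (disjoint_left.mp hDisj h)
          exact ⟨a, haS, by rw [hb']; exact Sym2.eq_swap⟩
        · have ha' : a = vstar := by
            rcases mem_insert.mp ha with h | h
            · exact h
            · exact absurd haT (disjoint_left.mp hDisj h)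
          exact ⟨b, hbS, by rw [ha']⟩
  have hcardν : (insert vstar S).card = S.card + 1 := card_insert_of_notMem hvS
  refine ⟨?_, ?_, ?_⟩
  · intro w hw
    rcases mem_insert.mp hw with rfl | hwS
    · exact ⟨u0, mem_insert_of_mem hu0, hComp u0 hu0⟩
    · exact ⟨vstar, mem_insert_self _ _, (hComp w hwS).symm⟩
  · rw [hfI, heInd]
    have h1 : (2 : ℤ) ≤ r := by exact_mod_cast hr2
    have h2 : (2 : ℤ) ≤ S.card := by exact_mod_cast hS2
    nlinarith
  · rw [hfI, heInd, hcardν]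
    push_cast
    have h1 : (2 : ℚ) ≤ r := by exact_mod_cast hr2
    have h2 : (2 : ℚ) ≤ S.card := by exact_mod_cast hS2
    have hden : (r : ℚ) * ((S.card : ℚ) - 1) + 1 - (S.card : ℚ) ≠ 0 := by
      have : 0 < (r : ℚ) * ((S.card : ℚ) - 1) + 1 - (S.card : ℚ) := by nlinarith
      exact ne_of_gt this
    have hnum : (r : ℚ) * (((S.card : ℚ) + 1) - 2) = (r : ℚ) * ((S.card : ℚ) - 1) := by ring
    rw [hnum]
    exact div_self hden
end

section
/- Let F be r-semi-bounded with respect to (S, T, v*) and suppose F contains a cycle. Then B_F is non-empty: there exists ν ⊆ V(F) with minimum degree of F[ν] at least 1 and f(ν) > e(F[ν]). -/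
open Finset

/-- Endpoint selector for edges: pick the non-`vstar` endpoint if `vstar` is an endpoint,
otherwise the `T`-endpoint. -/
def phiSel {V : Type*} [DecidableEq V] (T : Finset V) (vstar : V) : Sym2 V → V :=
  Sym2.lift ⟨fun a b =>
    if a = vstar then b else if b = vstar then a
    else if a ∈ T then (if b ∈ T then vstar else a)
    else (if b ∈ T then b else vstar),
    by
      intro a b
      by_cases h1 : a = vstar <;> by_cases h2 : b = vstar <;>
        by_cases h3 : a ∈ T <;> by_cases h4 : b ∈ T <;> simp_all⟩

lemma phiSel_spec {V : Type*} [Fintype V] [DecidableEq V] (F : SimpleGraph V)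
    [DecidableRel F.Adj] (S T : Finset V) (vstar : V)
    (hDisj : Disjoint S T)
    (hBip : ∀ u v, F.Adj u v → (u ∈ S ∧ v ∈ T) ∨ (u ∈ T ∧ v ∈ S))
    (hv : vstar ∈ T) :
    ∀ a b : V, F.Adj a b → ∃ x y, s(a, b) = s(x, y) ∧ x ∈ S ∧ y ∈ T ∧
      phiSel T vstar s(a, b) = (if y = vstar then x else y) := by
  intro a b hab
  rcases hBip a b hab with ⟨ha, hb⟩ | ⟨ha, hb⟩
  · have haT : a ∉ T := Finset.disjoint_left.mp hDisj ha
    have hav : a ≠ vstar := fun h => haT (h ▸ hv)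
    refine ⟨a, b, rfl, ha, hb, ?_⟩
    simp only [phiSel, Sym2.lift_mk]
    rw [if_neg hav]
    by_cases hbv : b = vstar
    · simp [hbv]
    · rw [if_neg hbv, if_neg haT, if_pos hb, if_neg hbv]
  · have hbT : b ∉ T := Finset.disjoint_left.mp hDisj hb
    have hbv : b ≠ vstar := fun h => hbT (h ▸ hv)
    refine ⟨b, a, Sym2.eq_swap, hb, ha, ?_⟩
    simp only [phiSel, Sym2.lift_mk]
    by_cases hav : a = vstar
    · simp [hav, hbv]
    · rw [if_neg hav, if_neg hbv, if_pos ha, if_neg hbT, if_neg hav]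

/-- Counting lemma: if every vertex of `T` other than `vstar` has degree at most 1,
then every nonempty `ν` induces fewer than `|ν|` edges. -/
lemma count_lt {V : Type*} [Fintype V] [DecidableEq V] (F : SimpleGraph V) [DecidableRel F.Adj]
    (S T : Finset V) (vstar : V)
    (hUnion : S ∪ T = Finset.univ) (hDisj : Disjoint S T)
    (hBip : ∀ u v, F.Adj u v → (u ∈ S ∧ v ∈ T) ∨ (u ∈ T ∧ v ∈ S))
    (hv : vstar ∈ T)
    (hsmall : ∀ v ∈ T, v ≠ vstar → F.degree v ≤ 1)
    (ν : Finset V) (hne : ν.Nonempty) : eInd F ν < ν.card := by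
  classical
  set E := F.edgeFinset.filter (fun e => ∀ v ∈ e, v ∈ ν) with hE
  -- unpack membership in E
  have hmem : ∀ a b : V, s(a, b) ∈ E → F.Adj a b ∧ a ∈ ν ∧ b ∈ ν := by
    intro a b h
    rw [hE, Finset.mem_filter, SimpleGraph.mem_edgeFinset, SimpleGraph.mem_edgeSet] at h
    exact ⟨h.1, h.2 a (by simp), h.2 b (by simp)⟩
  -- injectivity of phiSel on E
  have hinj : Set.InjOn (phiSel T vstar) ↑E := by
    rintro e1 he1 e2 he2 heq
    simp only [Finset.mem_coe] at he1 he2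
    induction e1 using Sym2.ind with | _ a b =>
    induction e2 using Sym2.ind with | _ c d =>
    obtain ⟨hab, haν, hbν⟩ := hmem a b he1
    obtain ⟨hcd, hcν, hdν⟩ := hmem c d he2
    obtain ⟨x1, y1, heq1, hx1, hy1, hphi1⟩ := phiSel_spec F S T vstar hDisj hBip hv a b hab
    obtain ⟨x2, y2, heq2, hx2, hy2, hphi2⟩ := phiSel_spec F S T vstar hDisj hBip hv c d hcd
    rw [heq1, heq2]
    rw [hphi1, hphi2] at heq
    have hadj1 : F.Adj x1 y1 := by
      have h' : s(x1, y1) ∈ F.edgeSet := heq1 ▸ (SimpleGraph.mem_edgeSet F).mpr hab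
      exact h'
    have hadj2 : F.Adj x2 y2 := by
      have h' : s(x2, y2) ∈ F.edgeSet := heq2 ▸ (SimpleGraph.mem_edgeSet F).mpr hcd
      exact h'
    by_cases h1 : y1 = vstar <;> by_cases h2 : y2 = vstar
    · rw [if_pos h1] at heq; rw [if_pos h2] at heq
      rw [h1, h2, heq]
    · rw [if_pos h1, if_neg h2] at heq
      exact absurd hy2 (heq ▸ Finset.disjoint_left.mp hDisj hx1)
    · rw [if_neg h1, if_pos h2] at heq
      exact absurd hy1 (heq.symm ▸ Finset.disjoint_left.mp hDisj hx2)
    · rw [if_neg h1, if_neg h2] at heq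
      subst heq
      have hdeg : F.degree y1 ≤ 1 := hsmall y1 hy1 h1
      have hx12 : x1 = x2 := by
        have h1m : x1 ∈ F.neighborFinset y1 :=
          (SimpleGraph.mem_neighborFinset F y1 x1).mpr hadj1.symm
        have h2m : x2 ∈ F.neighborFinset y1 :=
          (SimpleGraph.mem_neighborFinset F y1 x2).mpr hadj2.symm
        rw [← F.card_neighborFinset_eq_degree] at hdeg
        exact Finset.card_le_one.mp hdeg x1 h1m x2 h2m
      rw [hx12]
  by_cases hvν : vstar ∈ ν
  · -- image lands in ν.erase vstar
    have hmaps : ∀ e ∈ E, phiSel T vstar e ∈ ν.erase vstar := by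
      intro e he
      induction e using Sym2.ind with | _ a b =>
      obtain ⟨hab, haν, hbν⟩ := hmem a b he
      obtain ⟨x, y, heq1, hx, hy, hphi⟩ := phiSel_spec F S T vstar hDisj hBip hv a b hab
      have hxν : x ∈ ν := by
        have hxm : x ∈ s(a, b) := heq1 ▸ (by simp : x ∈ s(x, y))
        rcases Sym2.mem_iff.mp hxm with h | h
        · exact h ▸ haν
        · exact h ▸ hbν
      have hyν : y ∈ ν := by
        have hym : y ∈ s(a, b) := heq1 ▸ (by simp : y ∈ s(x, y))
        rcases Sym2.mem_iff.mp hym with h | h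
        · exact h ▸ haν
        · exact h ▸ hbν
      rw [hphi]
      by_cases h1 : y = vstar
      · rw [if_pos h1]
        refine Finset.mem_erase.mpr ⟨fun h => ?_, hxν⟩
        exact Finset.disjoint_left.mp hDisj hx (h ▸ hv)
      · rw [if_neg h1]
        exact Finset.mem_erase.mpr ⟨h1, hyν⟩
    have hle := Finset.card_le_card_of_injOn _ hmaps hinj
    calc eInd F ν ≤ (ν.erase vstar).card := hle
      _ < ν.card := Finset.card_erase_lt_of_mem hvν
  · -- vstar not in ν
    by_cases hEe : E.Nonempty
    · obtain ⟨e0, he0⟩ := hEe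
      -- get an S-vertex in ν
      have hSν : ∃ u, u ∈ ν ∧ u ∈ S := by
        induction e0 using Sym2.ind with | _ a b =>
        obtain ⟨hab, haν, hbν⟩ := hmem a b he0
        rcases hBip a b hab with ⟨ha, hb⟩ | ⟨ha, hb⟩
        · exact ⟨a, haν, ha⟩
        · exact ⟨b, hbν, hb⟩
      obtain ⟨u, huν, huS⟩ := hSν
      have hmaps : ∀ e ∈ E, phiSel T vstar e ∈ T ∩ ν := by
        intro e he
        induction e using Sym2.ind with | _ a b =>
        obtain ⟨hab, haν, hbν⟩ := hmem a b he
        obtain ⟨x, y, heq1, hx, hy, hphi⟩ := phiSel_spec F S T vstar hDisj hBip hv a b hab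
        have hyν : y ∈ ν := by
          have hym : y ∈ s(a, b) := heq1 ▸ (by simp : y ∈ s(x, y))
          rcases Sym2.mem_iff.mp hym with h | h
          · exact h ▸ haν
          · exact h ▸ hbν
        have h1 : y ≠ vstar := fun h => hvν (h ▸ hyν)
        rw [hphi, if_neg h1]
        exact Finset.mem_inter.mpr ⟨hy, hyν⟩
      have hle := Finset.card_le_card_of_injOn _ hmaps hinj
      have hss : T ∩ ν ⊂ ν := by
        refine Finset.ssubset_iff_of_subset Finset.inter_subset_right |>.mpr ?_
        exact ⟨u, huν, fun h => Finset.disjoint_left.mp hDisj huS (Finset.mem_inter.mp h).1⟩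
      calc eInd F ν ≤ (T ∩ ν).card := hle
        _ < ν.card := Finset.card_lt_card hss
    · have hE0 : E = ∅ := Finset.not_nonempty_iff_eq_empty.mp hEe
      have h0 : eInd F ν = 0 := by rw [eInd, ← hE, hE0, Finset.card_empty]
      rw [h0]
      exact Finset.card_pos.mpr hne

/-- If `F` is `r`-semi-bounded with respect to `(S, T, v*)` and contains a cycle, then `B_F` is
non-empty: some `ν ⊆ V(F)` has minimum induced degree at least 1 and `f(ν) > e(F[ν])`. -/
theorem stmt11 {V : Type*} [Fintype V] [DecidableEq V] (F : SimpleGraph V) [DecidableRel F.Adj]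
    (S T : Finset V) (vstar : V) (r : ℕ)
    (hUnion : S ∪ T = Finset.univ) (hDisj : Disjoint S T)
    (hBip : ∀ u v, F.Adj u v → (u ∈ S ∧ v ∈ T) ∨ (u ∈ T ∧ v ∈ S))
    (hv : vstar ∈ T) (hComp : ∀ u ∈ S, F.Adj vstar u)
    (hDeg : ∀ v ∈ T, v ≠ vstar → F.degree v ≤ r)
    (hcycle : ∃ ν : Finset V, ν.Nonempty ∧ ν.card ≤ eInd F ν) :
    ∃ ν : Finset V, 1 ≤ eInd F ν ∧ (∀ w ∈ ν, ∃ u ∈ ν, F.Adj w u) ∧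
      (eInd F ν : ℤ) < fI F S T ν := by
  classical
  by_cases hbig : ∃ v ∈ T, v ≠ vstar ∧ 2 ≤ F.degree v
  swap
  · push_neg at hbig
    obtain ⟨ν, hne, hcard⟩ := hcycle
    have hsmall : ∀ v ∈ T, v ≠ vstar → F.degree v ≤ 1 := by
      intro v hvT hvne
      have := hbig v hvT hvne
      omega
    exact absurd hcard (Nat.not_le.mpr (count_lt F S T vstar hUnion hDisj hBip hv hsmall ν hne))
  obtain ⟨v, hvT, hvne, hdv⟩ := hbig
  have hnbr : (F.neighborFinset v).Nonempty := by
    rw [← Finset.card_pos, F.card_neighborFinset_eq_degree]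
    omega
  obtain ⟨u, hu⟩ := hnbr
  rw [SimpleGraph.mem_neighborFinset] at hu
  have huS : u ∈ S := by
    rcases hBip v u hu with ⟨h1, _⟩ | ⟨_, h2⟩
    · exact absurd hvT (Finset.disjoint_left.mp hDisj h1)
    · exact h2
  have huT : u ∉ T := Finset.disjoint_left.mp hDisj huS
  have huv : u ≠ v := fun h => huT (h ▸ hvT)
  have huvs : u ≠ vstar := fun h => huT (h ▸ hv)
  -- neighbors of v are in S
  have hnbrS : F.neighborFinset v ⊆ S := by
    intro w hw
    rw [SimpleGraph.mem_neighborFinset] at hw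
    rcases hBip v w hw with ⟨h1, _⟩ | ⟨_, h2⟩
    · exact absurd hvT (Finset.disjoint_left.mp hDisj h1)
    · exact h2
  have hS2 : 2 ≤ S.card := le_trans (by rw [F.card_neighborFinset_eq_degree]; omega)
    (Finset.card_le_card hnbrS)
  have hdvs : 2 ≤ F.degree vstar := by
    have hsub : S ⊆ F.neighborFinset vstar := by
      intro w hw
      rw [SimpleGraph.mem_neighborFinset]
      exact hComp w hw
    calc 2 ≤ S.card := hS2
      _ ≤ (F.neighborFinset vstar).card := Finset.card_le_card hsub
      _ = F.degree vstar := F.card_neighborFinset_eq_degree vstar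
  set ν : Finset V := {u, v, vstar} with hν
  have huν : u ∈ ν := by simp [hν]
  have hvν : v ∈ ν := by simp [hν]
  have hvsν : vstar ∈ ν := by simp [hν]
  refine ⟨ν, ?_, ?_, ?_⟩
  · -- at least one edge
    rw [eInd]
    refine Finset.card_pos.mpr ⟨s(u, v), ?_⟩
    rw [Finset.mem_filter, SimpleGraph.mem_edgeFinset, SimpleGraph.mem_edgeSet]
    refine ⟨hu.symm, ?_⟩
    intro w hw
    rcases Sym2.mem_iff.mp hw with h | h
    · exact h ▸ huν
    · exact h ▸ hvν
  · -- min degree 1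
    intro w hw
    rw [hν] at hw
    simp only [Finset.mem_insert, Finset.mem_singleton] at hw
    rcases hw with h | h | h
    · exact ⟨vstar, hvsν, h ▸ (hComp u huS).symm⟩
    · exact ⟨u, huν, h ▸ hu⟩
    · exact ⟨u, huν, h ▸ hComp u huS⟩
  · -- the inequality
    have hEsub : F.edgeFinset.filter (fun e => ∀ x ∈ e, x ∈ ν) ⊆ {s(u, v), s(u, vstar)} := by
      intro e he
      induction e using Sym2.ind with | _ a b =>
      rw [Finset.mem_filter, SimpleGraph.mem_edgeFinset, SimpleGraph.mem_edgeSet] at he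
      obtain ⟨hab, hmem⟩ := he
      have haν := hmem a (by simp)
      have hbν := hmem b (by simp)
      rw [hν] at haν hbν
      simp only [Finset.mem_insert, Finset.mem_singleton] at haν hbν
      have hTT : ∀ x y : V, x ∈ T → y ∈ T → ¬ F.Adj x y := by
        intro x y hx hy hxy
        rcases hBip x y hxy with ⟨h1, _⟩ | ⟨_, h2⟩
        · exact Finset.disjoint_left.mp hDisj h1 hx
        · exact Finset.disjoint_left.mp hDisj h2 hy
      simp only [Finset.mem_insert, Finset.mem_singleton]
      rcases haν with ha | ha | ha <;> rcases hbν with hb | hb | hb <;> rw [ha, hb] at hab ⊢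
      · exact absurd rfl hab.ne
      · left; rfl
      · right; rfl
      · left; exact Sym2.eq_swap
      · exact absurd rfl hab.ne
      · exact absurd hab (hTT v vstar hvT hv)
      · right; exact Sym2.eq_swap
      · exact absurd hab (hTT vstar v hv hvT)
      · exact absurd rfl hab.ne
    have hEle : eInd F ν ≤ 2 := by
      calc eInd F ν ≤ ({s(u, v), s(u, vstar)} : Finset (Sym2 V)).card :=
            Finset.card_le_card hEsub
        _ ≤ 2 := (Finset.card_insert_le _ _).trans (by simp)
    -- compute fI
    have hSν : S ∩ ν = {u} := by
      ext w
      simp only [Finset.mem_inter, hν, Finset.mem_insert, Finset.mem_singleton]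
      constructor
      · rintro ⟨hwS, h | h | h⟩
        · exact h
        · exact absurd hvT (h ▸ fun hh => Finset.disjoint_left.mp hDisj hwS hh)
        · exact absurd hv (h ▸ fun hh => Finset.disjoint_left.mp hDisj hwS hh)
      · rintro rfl; exact ⟨huS, Or.inl rfl⟩
    have hTν : T ∩ ν = {v, vstar} := by
      ext w
      simp only [Finset.mem_inter, hν, Finset.mem_insert, Finset.mem_singleton]
      constructor
      · rintro ⟨hwT, h | h | h⟩
        · exact absurd hwT (h ▸ huT)
        · exact Or.inl h
        · exact Or.inr h
      · rintro (rfl | rfl)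
        · exact ⟨hvT, Or.inr (Or.inl rfl)⟩
        · exact ⟨hv, Or.inr (Or.inr rfl)⟩
    have hfilter : (T ∩ ν).filter (fun w => ∃ x ∈ ν, F.Adj w x) = {v, vstar} := by
      rw [hTν]
      apply Finset.filter_true_of_mem
      intro w hw
      rcases Finset.mem_insert.mp hw with rfl | hw
      · exact ⟨u, huν, hu⟩
      · rw [Finset.mem_singleton] at hw
        exact ⟨u, huν, hw ▸ hComp u huS⟩
    have hsum : ∑ w ∈ T ∩ ν, (F.degree w : ℤ) = F.degree v + F.degree vstar := by
      rw [hTν, Finset.sum_insert (by simp [hvne]), Finset.sum_singleton]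
    have hsup : ((T ∩ ν).filter (fun w => ∃ x ∈ ν, F.Adj w x)).sup (fun w => F.degree w)
        = max (F.degree v) (F.degree vstar) := by
      rw [hfilter]
      simp
    rw [fI, hSν, hsum, hsup]
    have h3 : (3 : ℤ) ≤ (({u} : Finset V).card : ℤ) + ((F.degree v : ℤ) + F.degree vstar)
        - (max (F.degree v) (F.degree vstar) : ℕ) := by
      rw [Finset.card_singleton]
      rcases max_cases (F.degree v) (F.degree vstar) with ⟨hm, _⟩ | ⟨hm, _⟩ <;>
        rw [hm] <;> push_cast <;> omega
    calc (eInd F ν : ℤ) ≤ 2 := by exact_mod_cast hEle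
      _ < 3 := by norm_num
      _ ≤ _ := h3
end

section
/- Let F be r-semi-bounded with respect to (S, T, v*) in which every vertex of S has degree at most Δ in F, and suppose F contains a cycle. Then every ν ∈ A_F satisfies a(ν) ≥ (r−1)/(rΔ−1); consequently a(F) ≥ (r−1)/(rΔ−1). -/
open Finset

/-- If `F` is `r`-semi-bounded with respect to `(S, T, v*)`, every vertex of `S` has degree at
most `Δ`, and `F` contains a cycle, then every `ν ∈ A_F` satisfies
`a(ν) ≥ (r - 1)/(rΔ - 1)`; consequently `a(F) ≥ (r - 1)/(rΔ - 1)`. -/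
theorem stmt12 {V : Type*} [Fintype V] [DecidableEq V] (F : SimpleGraph V) [DecidableRel F.Adj]
    (S T : Finset V) (vstar : V) (r : ℕ)
    (hUnion : S ∪ T = Finset.univ) (hDisj : Disjoint S T)
    (hBip : ∀ u v, F.Adj u v → (u ∈ S ∧ v ∈ T) ∨ (u ∈ T ∧ v ∈ S))
    (hv : vstar ∈ T) (hComp : ∀ u ∈ S, F.Adj vstar u)
    (hDeg : ∀ v ∈ T, v ≠ vstar → F.degree v ≤ r)
    (Δ : ℕ) (hΔ : ∀ u ∈ S, F.degree u ≤ Δ)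
    (hcycle : ∃ ν : Finset V, ν.Nonempty ∧ ν.card ≤ eInd F ν) :
    ∀ ν : Finset V, (∀ w ∈ ν, ∃ u ∈ ν, F.Adj w u) →
      fI F S T ν - 1 < (r : ℤ) * ((eInd F ν : ℤ) - 1) →
      ((r : ℚ) - 1) / ((r : ℚ) * (Δ : ℚ) - 1) ≤
        ((r : ℚ) * ((ν.card : ℚ) - 2) + 1 - (fI F S T ν : ℚ)) /
          ((r : ℚ) * ((eInd F ν : ℚ) - 1) + 1 - (fI F S T ν : ℚ)) := by
  intro ν hmin hlt
  -- Case r = 0 : both sides equal 1.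
  by_cases hr0 : r = 0
  · subst hr0
    have hf : fI F S T ν ≤ 0 := by
      have : (0:ℤ) * ((eInd F ν : ℤ) - 1) = 0 := by ring
      push_cast at hlt
      linarith
    have hfQ : (fI F S T ν : ℚ) ≤ 0 := by exact_mod_cast hf
    have h1 : (0:ℚ) < 1 - (fI F S T ν : ℚ) := by linarith
    push_cast
    rw [zero_mul, zero_mul, zero_mul, zero_add, zero_sub]
    rw [div_self (ne_of_gt h1)]
    norm_num
  have hr1 : 1 ≤ r := Nat.one_le_iff_ne_zero.mpr hr0
  -- ν is nonempty
  have hν : ν.Nonempty := by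
    rw [Finset.nonempty_iff_ne_empty]
    rintro rfl
    have he0 : eInd F (∅ : Finset V) = 0 := by
      rw [eInd, Finset.card_eq_zero, Finset.filter_eq_empty_iff]
      intro e _ h
      exact Finset.notMem_empty _ (h e.out.1 (Sym2.out_fst_mem e))
    have hf0 : fI F S T (∅ : Finset V) = 0 := by simp [fI]
    rw [hf0, he0] at hlt
    push_cast at hlt
    have : (1:ℤ) ≤ (r:ℤ) := by exact_mod_cast hr1
    nlinarith
  -- Δ ≥ 1
  have hΔ1 : 1 ≤ Δ := by
    obtain ⟨μ, hμne, hμ⟩ := hcycle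
    have hpos : 0 < eInd F μ := lt_of_lt_of_le (Finset.card_pos.mpr hμne) hμ
    rw [eInd, Finset.card_pos] at hpos
    obtain ⟨e, he⟩ := hpos
    rw [Finset.mem_filter, SimpleGraph.mem_edgeFinset] at he
    obtain ⟨he1, -⟩ := he
    have key : ∃ a, a ∈ S ∧ 0 < F.degree a := by
      revert he1
      induction e using Sym2.ind with
      | _ a b =>
        intro he1
        rw [SimpleGraph.mem_edgeSet] at he1
        rcases hBip a b he1 with ⟨haS, _⟩ | ⟨_, hbS⟩
        · exact ⟨a, haS, (F.degree_pos_iff_exists_adj a).mpr ⟨b, he1⟩⟩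
        · exact ⟨b, hbS, (F.degree_pos_iff_exists_adj b).mpr ⟨a, he1.symm⟩⟩
    obtain ⟨a, haS, hda⟩ := key
    exact le_trans hda (hΔ a haS)
  -- notation
  set sc := (S ∩ ν).card with hsc
  set tc := (T ∩ ν).card with htc
  set E := eInd F ν with hE
  set Sn := ∑ v ∈ T ∩ ν, F.degree v with hSn
  set D := (T ∩ ν).sup (fun v => F.degree v) with hDdef
  -- the filter in fI is all of T ∩ ν
  have hfilter : (T ∩ ν).filter (fun v => ∃ u ∈ ν, F.Adj v u) = T ∩ ν :=
    Finset.filter_true_of_mem (fun v hv' => hmin v (Finset.mem_inter.mp hv').2)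
  have hfIZ : fI F S T ν = (sc : ℤ) + (Sn : ℤ) - (D : ℤ) := by
    rw [fI, hfilter, hSn]
    push_cast
    ring
  -- sc, tc ≥ 1
  obtain ⟨w, hw⟩ := hν
  obtain ⟨u, hu, hadj⟩ := hmin w hw
  have hst : 1 ≤ sc ∧ 1 ≤ tc := by
    rcases hBip w u hadj with ⟨hwS, huT⟩ | ⟨hwT, huS⟩
    · exact ⟨Finset.card_pos.mpr ⟨w, Finset.mem_inter.mpr ⟨hwS, hw⟩⟩,
        Finset.card_pos.mpr ⟨u, Finset.mem_inter.mpr ⟨huT, hu⟩⟩⟩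
    · exact ⟨Finset.card_pos.mpr ⟨u, Finset.mem_inter.mpr ⟨huS, hu⟩⟩,
        Finset.card_pos.mpr ⟨w, Finset.mem_inter.mpr ⟨hwT, hw⟩⟩⟩
  obtain ⟨hs1, ht1⟩ := hst
  -- |ν| = sc + tc
  have hcard : sc + tc = ν.card := by
    rw [hsc, htc,
      ← Finset.card_union_of_disjoint (hDisj.mono Finset.inter_subset_left Finset.inter_subset_left),
      ← Finset.union_inter_distrib_right, hUnion, Finset.univ_inter]
  -- edge count from the S side
  have hES : E ≤ ∑ u ∈ S ∩ ν, (ν.filter (F.Adj u)).card := by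
    rw [hE, eInd]
    calc (F.edgeFinset.filter (fun e => ∀ v ∈ e, v ∈ ν)).card
        ≤ ((S ∩ ν).biUnion (fun u => (ν.filter (F.Adj u)).image (fun w => s(u, w)))).card := by
          apply Finset.card_le_card
          intro e he
          rw [Finset.mem_filter, SimpleGraph.mem_edgeFinset] at he
          obtain ⟨he1, he2⟩ := he
          revert he1 he2
          induction e using Sym2.ind with
          | _ a b =>
            intro he1 he2
            rw [SimpleGraph.mem_edgeSet] at he1
            have haν : a ∈ ν := he2 a (by simp)
            have hbν : b ∈ ν := he2 b (by simp)
            rw [Finset.mem_biUnion]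
            rcases hBip a b he1 with ⟨haS, hbT⟩ | ⟨haT, hbS⟩
            · exact ⟨a, Finset.mem_inter.mpr ⟨haS, haν⟩,
                Finset.mem_image.mpr ⟨b, Finset.mem_filter.mpr ⟨hbν, he1⟩, rfl⟩⟩
            · exact ⟨b, Finset.mem_inter.mpr ⟨hbS, hbν⟩,
                Finset.mem_image.mpr ⟨a, Finset.mem_filter.mpr ⟨haν, he1.symm⟩, Sym2.eq_swap⟩⟩
      _ ≤ ∑ u ∈ S ∩ ν, ((ν.filter (F.Adj u)).image (fun w => s(u, w))).card :=
          Finset.card_biUnion_le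
      _ ≤ ∑ u ∈ S ∩ ν, (ν.filter (F.Adj u)).card :=
          Finset.sum_le_sum fun u _ => Finset.card_image_le
  have hdegΔ : ∀ u ∈ S ∩ ν, (ν.filter (F.Adj u)).card ≤ Δ := by
    intro u hu'
    have hsub : ν.filter (F.Adj u) ⊆ F.neighborFinset u := by
      intro w' hw'
      rw [SimpleGraph.mem_neighborFinset]
      exact (Finset.mem_filter.mp hw').2
    calc (ν.filter (F.Adj u)).card ≤ (F.neighborFinset u).card := Finset.card_le_card hsub
      _ = F.degree u := rfl
      _ ≤ Δ := hΔ u (Finset.mem_inter.mp hu').1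
  have hdegt : ∀ u ∈ S ∩ ν, (ν.filter (F.Adj u)).card ≤ tc := by
    intro u hu'
    apply Finset.card_le_card
    intro w' hw'
    obtain ⟨hw'ν, hw'adj⟩ := Finset.mem_filter.mp hw'
    rcases hBip u w' hw'adj with ⟨-, hw'T⟩ | ⟨huT, -⟩
    · exact Finset.mem_inter.mpr ⟨hw'T, hw'ν⟩
    · exact absurd huT (Finset.disjoint_left.mp hDisj (Finset.mem_inter.mp hu').1)
  have hE1 : E ≤ sc * Δ := by
    refine le_trans hES ?_
    calc ∑ u ∈ S ∩ ν, (ν.filter (F.Adj u)).card ≤ (S ∩ ν).card • Δ :=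
          Finset.sum_le_card_nsmul _ _ _ hdegΔ
      _ = sc * Δ := by rw [smul_eq_mul]
  have hE1t : E ≤ sc * tc := by
    refine le_trans hES ?_
    calc ∑ u ∈ S ∩ ν, (ν.filter (F.Adj u)).card ≤ (S ∩ ν).card • tc :=
          Finset.sum_le_card_nsmul _ _ _ hdegt
      _ = sc * tc := by rw [smul_eq_mul]
  have hE2 : (E : ℤ) ≤ ((sc : ℤ) - 1) * Δ + tc := by
    have hE1' : (E : ℤ) ≤ (sc : ℤ) * Δ := by exact_mod_cast hE1
    have hE1t' : (E : ℤ) ≤ (sc : ℤ) * tc := by exact_mod_cast hE1t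
    have hs1' : (1 : ℤ) ≤ (sc : ℤ) := by exact_mod_cast hs1
    rcases le_total Δ tc with h | h
    · have h' : (Δ : ℤ) ≤ (tc : ℤ) := by exact_mod_cast h
      nlinarith
    · have h' : (tc : ℤ) ≤ (Δ : ℤ) := by exact_mod_cast h
      have hp : (0:ℤ) ≤ ((sc : ℤ) - 1) * ((Δ : ℤ) - tc) :=
        mul_nonneg (by linarith) (by linarith)
      nlinarith
  -- sum of degrees bound
  have hTν : (T ∩ ν).Nonempty := Finset.card_pos.mp ht1
  have hw2 : ∃ w0 ∈ T ∩ ν, F.degree w0 ≤ D ∧ ∀ v ∈ T ∩ ν, v ≠ w0 → F.degree v ≤ r := by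
    by_cases hvν : vstar ∈ ν
    · refine ⟨vstar, Finset.mem_inter.mpr ⟨hv, hvν⟩,
        Finset.le_sup (f := fun v => F.degree v) (Finset.mem_inter.mpr ⟨hv, hvν⟩), ?_⟩
      intro v hv' hne
      exact hDeg v (Finset.mem_inter.mp hv').1 hne
    · obtain ⟨w0, hw0⟩ := hTν
      refine ⟨w0, hw0, Finset.le_sup (f := fun v => F.degree v) hw0, ?_⟩
      intro v hv' _
      refine hDeg v (Finset.mem_inter.mp hv').1 (fun h => hvν ?_)
      exact h ▸ (Finset.mem_inter.mp hv').2
  obtain ⟨w0, hw0m, hw0D, hw0r⟩ := hw2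
  have hS_b : Sn ≤ D + (tc - 1) * r := by
    have hsplit : ∑ v ∈ (T ∩ ν).erase w0, F.degree v + F.degree w0 = Sn :=
      Finset.sum_erase_add _ _ hw0m
    have herase : ∑ v ∈ (T ∩ ν).erase w0, F.degree v ≤ (tc - 1) * r := by
      calc ∑ v ∈ (T ∩ ν).erase w0, F.degree v ≤ ((T ∩ ν).erase w0).card • r :=
            Finset.sum_le_card_nsmul _ _ _ (fun v hv' =>
              hw0r v (Finset.mem_of_mem_erase hv') (Finset.ne_of_mem_erase hv'))
        _ = (tc - 1) * r := by rw [smul_eq_mul, Finset.card_erase_of_mem hw0m]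
    linarith
  have hS_Z : (Sn : ℤ) ≤ (D : ℤ) + ((tc : ℤ) - 1) * r := by
    have := hS_b
    have h' : (Sn : ℤ) ≤ (D : ℤ) + ((tc - 1 : ℕ) : ℤ) * r := by exact_mod_cast this
    rwa [Nat.cast_sub ht1] at h'
  -- the denominator bound from the hypothesis
  have hd : (1 : ℤ) ≤ (r : ℤ) * ((E : ℤ) - 1) + 1 - fI F S T ν := by linarith
  -- cast everything to ℚ
  have hs1Q : (1 : ℚ) ≤ (sc : ℚ) := by exact_mod_cast hs1
  have ht1Q : (1 : ℚ) ≤ (tc : ℚ) := by exact_mod_cast ht1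
  have hr1Q : (1 : ℚ) ≤ (r : ℚ) := by exact_mod_cast hr1
  have hΔ1Q : (1 : ℚ) ≤ (Δ : ℚ) := by exact_mod_cast hΔ1
  have hE2Q : (E : ℚ) ≤ ((sc : ℚ) - 1) * Δ + tc := by exact_mod_cast hE2
  have hS_Q : (Sn : ℚ) ≤ (D : ℚ) + ((tc : ℚ) - 1) * r := by exact_mod_cast hS_Z
  have hdQ : (1 : ℚ) ≤ (r : ℚ) * ((E : ℚ) - 1) + 1 - (fI F S T ν : ℚ) := by exact_mod_cast hd
  have hfIQ : (fI F S T ν : ℚ) = (sc : ℚ) + (Sn : ℚ) - (D : ℚ) := by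
    rw [hfIZ]; push_cast; ring
  have hcardQ : (ν.card : ℚ) = (sc : ℚ) + (tc : ℚ) := by exact_mod_cast hcard.symm
  by_cases hrΔ : r * Δ = 1
  · have hle1 : r ≤ r * Δ := Nat.le_mul_of_pos_right r (by omega)
    have hle2 : Δ ≤ r * Δ := Nat.le_mul_of_pos_left Δ (by omega)
    rw [hrΔ] at hle1 hle2
    have hre : r = 1 := le_antisymm hle1 hr1
    have hΔe : Δ = 1 := le_antisymm hle2 hΔ1
    subst hre; subst hΔe
    push_cast at hdQ hE2Q
    norm_num
    apply div_nonneg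
    · rw [hcardQ, hfIQ]
      rw [hfIQ] at hdQ
      linarith [hE2Q]
    · linarith [hdQ]
  · have hrΔ2 : 2 ≤ r * Δ := by
      exact Nat.lt_of_le_of_ne (Nat.one_le_iff_ne_zero.mpr
        (Nat.mul_ne_zero (by omega) (by omega))) (Ne.symm hrΔ)
    have hrΔ2Q : (2 : ℚ) ≤ (r : ℚ) * Δ := by exact_mod_cast hrΔ2
    rw [div_le_div_iff₀ (by linarith) (by linarith)]
    rw [hcardQ, hfIQ]
    rw [hfIQ] at hdQ
    have hA : (0:ℚ) ≤ (r : ℚ) * ((Δ : ℚ) - 1) * ((D : ℚ) + ((tc : ℚ) - 1) * r - Sn) :=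
      mul_nonneg (mul_nonneg (by linarith) (by linarith)) (by linarith)
    have hB : (0:ℚ) ≤ (r : ℚ) * ((r : ℚ) - 1) * (((sc : ℚ) - 1) * Δ + tc - E) :=
      mul_nonneg (mul_nonneg (by linarith) (by linarith)) (by linarith)
    linarith [hA, hB, hdQ]
end

section
/- Let F be r-semi-bounded with respect to (S, T, v*) such that every vertex in T \ {v*} has degree exactly r. Then for every ν ⊆ V(F) with e(F[ν]) ≥ 1 we have f(ν) = |S ∩ ν| + r(|T ∩ ν| − 1), and hence every ν ∈ A_F satisfies a(ν) = (r−1)(|S∩ν|−1) / (r(e(F[ν])−|T∩ν|)+1−|S∩ν|). -/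
open Finset

/-- If `F` is `r`-semi-bounded with respect to `(S, T, v*)`, every vertex of `T \ {v*}` has
degree exactly `r`, and `|S| ≥ r`, then every `ν` with `e(F[ν]) ≥ 1` has
`f(ν) = |S ∩ ν| + r(|T ∩ ν| - 1)`, and every `ν ∈ A_F` has
`a(ν) = (r-1)(|S∩ν|-1) / (r(e(F[ν]) - |T∩ν|) + 1 - |S∩ν|)`. -/
theorem stmt13 {V : Type*} [Fintype V] [DecidableEq V] (F : SimpleGraph V) [DecidableRel F.Adj]
    (S T : Finset V) (vstar : V) (r : ℕ)
    (hUnion : S ∪ T = Finset.univ) (hDisj : Disjoint S T)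
    (hBip : ∀ u v, F.Adj u v → (u ∈ S ∧ v ∈ T) ∨ (u ∈ T ∧ v ∈ S))
    (hv : vstar ∈ T) (hComp : ∀ u ∈ S, F.Adj vstar u)
    (hDeg : ∀ v ∈ T, v ≠ vstar → F.degree v ≤ r)
    (hDegEq : ∀ v ∈ T, v ≠ vstar → F.degree v = r) (hSr : r ≤ S.card) :
    (∀ ν : Finset V, 1 ≤ eInd F ν →
      fI F S T ν = ((S ∩ ν).card : ℤ) + (r : ℤ) * (((T ∩ ν).card : ℤ) - 1)) ∧
    (∀ ν : Finset V, (∀ w ∈ ν, ∃ u ∈ ν, F.Adj w u) →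
      fI F S T ν - 1 < (r : ℤ) * ((eInd F ν : ℤ) - 1) →
      ((r : ℚ) * ((ν.card : ℚ) - 2) + 1 - (fI F S T ν : ℚ)) /
          ((r : ℚ) * ((eInd F ν : ℚ) - 1) + 1 - (fI F S T ν : ℚ))
        = ((r : ℚ) - 1) * (((S ∩ ν).card : ℚ) - 1) /
            ((r : ℚ) * ((eInd F ν : ℚ) - ((T ∩ ν).card : ℚ)) + 1 - ((S ∩ ν).card : ℚ))) := by
  have hvS : vstar ∉ S := fun h => (Finset.disjoint_left.mp hDisj h) hv
  have hNbr : F.neighborFinset vstar = S := by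
    ext u
    simp only [SimpleGraph.mem_neighborFinset]
    constructor
    · intro h
      rcases hBip vstar u h with ⟨h1, _⟩ | ⟨_, h2⟩
      · exact absurd h1 hvS
      · exact h2
    · intro h; exact hComp u h
  have hdegv : F.degree vstar = S.card := by
    rw [← SimpleGraph.card_neighborFinset_eq_degree, hNbr]
  have key : ∀ ν : Finset V, 1 ≤ eInd F ν →
      fI F S T ν = ((S ∩ ν).card : ℤ) + (r : ℤ) * (((T ∩ ν).card : ℤ) - 1) := by
    intro ν hν
    have hedge : ∃ x ∈ S ∩ ν, ∃ y ∈ T ∩ ν, F.Adj y x := by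
      obtain ⟨e, he⟩ := Finset.card_pos.mp hν
      rw [Finset.mem_filter] at he
      obtain ⟨heE, hin⟩ := he
      induction e using Sym2.ind with
      | _ a b =>
        rw [SimpleGraph.mem_edgeFinset, SimpleGraph.mem_edgeSet] at heE
        have ha : a ∈ ν := hin a (by simp)
        have hb : b ∈ ν := hin b (by simp)
        rcases hBip a b heE with ⟨h1, h2⟩ | ⟨h1, h2⟩
        · exact ⟨a, Finset.mem_inter.mpr ⟨h1, ha⟩, b, Finset.mem_inter.mpr ⟨h2, hb⟩, heE.symm⟩
        · exact ⟨b, Finset.mem_inter.mpr ⟨h2, hb⟩, a, Finset.mem_inter.mpr ⟨h1, ha⟩, heE⟩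
    obtain ⟨x, hx, y, hy, hyx⟩ := hedge
    have hxν : x ∈ ν := (Finset.mem_inter.mp hx).2
    have hxS : x ∈ S := (Finset.mem_inter.mp hx).1
    unfold fI
    by_cases hvν : vstar ∈ ν
    · have hvTν : vstar ∈ T ∩ ν := Finset.mem_inter.mpr ⟨hv, hvν⟩
      have hvfil : vstar ∈ (T ∩ ν).filter (fun v => ∃ u ∈ ν, F.Adj v u) :=
        Finset.mem_filter.mpr ⟨hvTν, ⟨x, hxν, hComp x hxS⟩⟩
      have hsup : ((T ∩ ν).filter (fun v => ∃ u ∈ ν, F.Adj v u)).sup (fun v => F.degree v)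
          = S.card := by
        apply le_antisymm
        · apply Finset.sup_le
          intro v hvf
          obtain ⟨hvT, _⟩ := Finset.mem_filter.mp hvf
          by_cases hvv : v = vstar
          · rw [hvv, hdegv]
          · exact le_trans (hDeg v (Finset.mem_inter.mp hvT).1 hvv) hSr
        · calc S.card = F.degree vstar := hdegv.symm
            _ ≤ _ := Finset.le_sup (f := fun v => F.degree v) hvfil
      have hsum2 : ∑ v ∈ (T ∩ ν).erase vstar, (F.degree v : ℤ)
          = ((T ∩ ν).erase vstar).card • (r : ℤ) := by
        rw [Finset.sum_congr rfl ?_, Finset.sum_const]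
        intro v hv'
        rw [hDegEq v (Finset.mem_inter.mp (Finset.mem_of_mem_erase hv')).1
          (Finset.ne_of_mem_erase hv')]
      have hsum : ∑ v ∈ T ∩ ν, (F.degree v : ℤ)
          = (S.card : ℤ) + (r : ℤ) * (((T ∩ ν).card : ℤ) - 1) := by
        rw [← Finset.add_sum_erase _ _ hvTν, hdegv, hsum2,
          Finset.card_erase_of_mem hvTν, nsmul_eq_mul]
        have ht1 : 1 ≤ (T ∩ ν).card := Finset.card_pos.mpr ⟨vstar, hvTν⟩
        push_cast [ht1]
        ring
      rw [hsup, hsum]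
      ring
    · have hall : ∀ v ∈ T ∩ ν, F.degree v = r := by
        intro v hv'
        obtain ⟨hvT, hvν'⟩ := Finset.mem_inter.mp hv'
        exact hDegEq v hvT (fun h => hvν (h ▸ hvν'))
      have hyfil : y ∈ (T ∩ ν).filter (fun v => ∃ u ∈ ν, F.Adj v u) :=
        Finset.mem_filter.mpr ⟨hy, ⟨x, hxν, hyx⟩⟩
      have hsup : ((T ∩ ν).filter (fun v => ∃ u ∈ ν, F.Adj v u)).sup (fun v => F.degree v)
          = r := by
        apply le_antisymm
        · apply Finset.sup_le
          intro v hvf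
          rw [hall v (Finset.mem_filter.mp hvf).1]
        · have : F.degree y ≤ _ := Finset.le_sup (f := fun v => F.degree v) hyfil
          rwa [hall y hy] at this
      have hsum : ∑ v ∈ T ∩ ν, (F.degree v : ℤ) = (T ∩ ν).card • (r : ℤ) := by
        rw [Finset.sum_congr rfl ?_, Finset.sum_const]
        intro v hv'
        rw [hall v hv']
      rw [hsup, hsum, nsmul_eq_mul]
      ring
  refine ⟨key, ?_⟩
  intro ν hmin hlt
  by_cases hne : ν.Nonempty
  · obtain ⟨w, hw⟩ := hne
    obtain ⟨u, hu, hwu⟩ := hmin w hw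
    have he1 : 1 ≤ eInd F ν := by
      apply Finset.card_pos.mpr
      refine ⟨s(w, u), Finset.mem_filter.mpr ⟨SimpleGraph.mem_edgeFinset.mpr hwu, ?_⟩⟩
      intro v hv'
      rcases Sym2.mem_iff.mp hv' with h | h <;> subst h <;> assumption
    have hf := key ν he1
    have hcard : (ν.card : ℤ) = ((S ∩ ν).card : ℤ) + ((T ∩ ν).card : ℤ) := by
      have hu2 : (S ∩ ν) ∪ (T ∩ ν) = ν := by
        rw [← Finset.union_inter_distrib_right, hUnion, Finset.univ_inter]
      have hd3 : Disjoint (S ∩ ν) (T ∩ ν) :=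
        hDisj.mono Finset.inter_subset_left Finset.inter_subset_left
      have h3 := Finset.card_union_of_disjoint hd3
      rw [hu2] at h3
      rw [h3]
      push_cast
      ring
    have hfQ : (fI F S T ν : ℚ) = ((S ∩ ν).card : ℚ) + (r : ℚ) * (((T ∩ ν).card : ℚ) - 1) := by
      have := congrArg (fun z : ℤ => (z : ℚ)) hf
      push_cast at this
      exact this
    have hcardQ : (ν.card : ℚ) = ((S ∩ ν).card : ℚ) + ((T ∩ ν).card : ℚ) := by
      exact_mod_cast hcard
    rw [hfQ, hcardQ]
    congr 1 <;> ring
  · rw [Finset.not_nonempty_iff_eq_empty] at hne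
    subst hne
    have heInd : eInd F ∅ = 0 := by
      rw [eInd, Finset.card_eq_zero, Finset.filter_eq_empty_iff]
      intro e he'
      induction e using Sym2.ind with
      | _ a b =>
        intro h
        exact absurd (h a (by simp)) (by simp)
    have hfI : fI F S T ∅ = 0 := by simp [fI]
    rw [heInd, hfI] at hlt
    have hr0 : r = 0 := by
      push_cast at hlt
      omega
    subst hr0
    rw [heInd, hfI]
    simp [Finset.inter_empty]
end

section
/- Let Φ be a D-good collection of embeddings of F into G, let ν' ⊆ ν ⊆ V(F) with e(F[ν]) > 0 and e(F[ν']) > 0, and let ψ': F[ν'] → G be a partial embedding. Then the number of partial embeddings ψ: F[ν] → G with deg_Φ(ψ) ≥ D(ν)/2 and ψ restricted to ν' equal to ψ' is at most 2·D(ν')/D(ν). -/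
open Finset
open scoped Classical

/-- `deg_Φ(ψ)`: the number of maps `φ ∈ Φ` whose restriction to `ν` is `ψ`. -/
noncomputable def degPhi {V W : Type*} [Fintype V] [Fintype W] [DecidableEq W]
    (Φ : Finset (V → W)) (ν : Finset V) (ψ : {x // x ∈ ν} → W) : ℕ :=
  (Φ.filter (fun φ => ∀ v : {x // x ∈ ν}, φ v.1 = ψ v)).card

/-- If `Φ` is a `D`-good collection of embeddings of `F` into `G`, `ν' ⊆ ν` both induce at
least one edge, and `ψ' : F[ν'] → G` is a partial embedding, then the number of partial
embeddings `ψ : F[ν] → G` with `deg_Φ(ψ) ≥ D(ν)/2` whose restriction to `ν'` is `ψ'` is at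
most `2 D(ν')/D(ν)`. -/
theorem stmt15 {V W : Type*} [Fintype V] [Fintype W] [DecidableEq V] [DecidableEq W]
    (F : SimpleGraph V) (G : SimpleGraph W) [DecidableRel F.Adj] [DecidableRel G.Adj]
    (Φ : Finset (V → W))
    (hemb : ∀ φ ∈ Φ, Function.Injective φ ∧ ∀ u v : V, F.Adj u v → G.Adj (φ u) (φ v))
    (D : Finset V → ℝ)
    (hDpos : ∀ μ : Finset V, 0 < eInd F μ → 0 < D μ)
    (hgood : ∀ (μ : Finset V), 0 < eInd F μ → ∀ ψ : {x // x ∈ μ} → W,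
      (degPhi Φ μ ψ : ℝ) ≤ D μ)
    (ν' ν : Finset V) (hsub : ν' ⊆ ν) (hν : 0 < eInd F ν) (hν' : 0 < eInd F ν')
    (ψ' : {x // x ∈ ν'} → W) :
    (((Finset.univ : Finset ({x // x ∈ ν} → W)).filter
        (fun ψ => D ν / 2 ≤ (degPhi Φ ν ψ : ℝ) ∧
          ∀ (v : V) (hv : v ∈ ν'), ψ ⟨v, hsub hv⟩ = ψ' ⟨v, hv⟩)).card : ℝ)
      ≤ 2 * D ν' / D ν := by
  set S := ((Finset.univ : Finset ({x // x ∈ ν} → W)).filter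
        (fun ψ => D ν / 2 ≤ (degPhi Φ ν ψ : ℝ) ∧
          ∀ (v : V) (hv : v ∈ ν'), ψ ⟨v, hsub hv⟩ = ψ' ⟨v, hv⟩)) with hS
  have hDν := hDpos ν hν
  have key : (S.card : ℝ) * (D ν / 2) ≤ D ν' := by
    have h1 : (S.card : ℝ) * (D ν / 2) ≤ ∑ ψ ∈ S, (degPhi Φ ν ψ : ℝ) := by
      rw [Finset.card_eq_sum_ones S]
      push_cast
      rw [Finset.sum_mul]
      apply Finset.sum_le_sum
      intro ψ hψ
      rw [hS, Finset.mem_filter] at hψ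
      simpa using hψ.2.1
    have h2 : ∑ ψ ∈ S, (degPhi Φ ν ψ : ℝ) ≤ (degPhi Φ ν' ψ' : ℝ) := by
      have hdisj : ∀ ψ₁ ∈ S, ∀ ψ₂ ∈ S, ψ₁ ≠ ψ₂ →
          Disjoint (Φ.filter (fun φ => ∀ v : {x // x ∈ ν}, φ v.1 = ψ₁ v))
            (Φ.filter (fun φ => ∀ v : {x // x ∈ ν}, φ v.1 = ψ₂ v)) := by
        intro ψ₁ _ ψ₂ _ hne
        rw [Finset.disjoint_left]
        intro φ h1 h2
        rw [Finset.mem_filter] at h1 h2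
        exact hne (funext fun v => (h1.2 v).symm.trans (h2.2 v))
      have hsum : ∑ ψ ∈ S, (degPhi Φ ν ψ) =
          (S.biUnion (fun ψ => Φ.filter (fun φ => ∀ v : {x // x ∈ ν}, φ v.1 = ψ v))).card := by
        rw [Finset.card_biUnion hdisj]
        rfl
      have hsub2 : (S.biUnion (fun ψ => Φ.filter (fun φ => ∀ v : {x // x ∈ ν}, φ v.1 = ψ v))) ⊆
          Φ.filter (fun φ => ∀ v : {x // x ∈ ν'}, φ v.1 = ψ' v) := by
        intro φ hφ
        rw [Finset.mem_biUnion] at hφ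
        obtain ⟨ψ, hψS, hφψ⟩ := hφ
        rw [Finset.mem_filter] at hφψ ⊢
        refine ⟨hφψ.1, fun v => ?_⟩
        rw [hS, Finset.mem_filter] at hψS
        rw [← hψS.2.2 v.1 v.2]
        exact hφψ.2 ⟨v.1, hsub v.2⟩
      have := Finset.card_le_card hsub2
      rw [← hsum] at this
      exact_mod_cast this
    exact le_trans (h1.trans h2) (hgood ν' hν' ψ')
  rw [le_div_iff₀ hDν]
  linarith
end

section
/- Let M > 0, s > 0, 0 < δ < 1, and let a_1, …, a_m be real numbers summing to s with 1 ≤ a_j ≤ (1−δ)^j · M for each j. Then s·log(s) ≤ Σ_{j=1}^m a_j·log(a_j) + O(M/δ²); concretely there is an absolute constant K such that s·log(s) ≤ Σ_j a_j·log(a_j) + K·M/δ². -/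
open Finset

private lemma geomAux (x : ℝ) (hx0 : 0 ≤ x) (hx1 : x < 1) (n : ℕ) :
    ∑ j ∈ Finset.range n, x ^ j ≤ 1 / (1 - x) := by
  rw [geom_sum_eq (by intro h; rw [h] at hx1; linarith) n]
  have h : (x ^ n - 1) / (x - 1) = (1 - x ^ n) / (1 - x) := by
    rw [div_eq_div_iff (by linarith) (by linarith)]; ring
  have hxn : 0 ≤ x ^ n := pow_nonneg hx0 n
  rw [h]
  gcongr
  · linarith

private lemma logAux (t : ℝ) (ht : 0 < t) : Real.log t ≤ 2 * Real.sqrt t := by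
  have h1 : Real.log (Real.sqrt t) ≤ Real.sqrt t - 1 :=
    Real.log_le_sub_one_of_pos (Real.sqrt_pos.2 ht)
  have h2 : Real.log (Real.sqrt t) = Real.log t / 2 := Real.log_sqrt ht.le
  linarith

/-- (Collares–Morris)  There is an absolute constant `K` such that: for all `M, s > 0`,
`0 < δ < 1`, and real numbers `a_1, …, a_m` summing to `s` with `1 ≤ a_j ≤ (1 - δ)^j M` for
each `j`, we have `s log s ≤ Σ_j a_j log a_j + K M / δ²`. -/
theorem stmt16 :
    ∃ K : ℝ, 0 < K ∧ ∀ (M s δ : ℝ) (m : ℕ) (a : ℕ → ℝ),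
      0 < M → 0 < s → 0 < δ → δ < 1 →
      (∑ j ∈ Finset.Icc 1 m, a j) = s →
      (∀ j ∈ Finset.Icc 1 m, 1 ≤ a j ∧ a j ≤ (1 - δ) ^ j * M) →
      s * Real.log s ≤ (∑ j ∈ Finset.Icc 1 m, a j * Real.log (a j)) + K * M / δ ^ 2 := by
  refine ⟨4, by norm_num, ?_⟩
  intro M s δ m a hM hs hδ0 hδ1 hsum ha
  have h1δ : (0:ℝ) ≤ 1 - δ := by linarith
  set r := Real.sqrt (1 - δ) with hr
  have hrpos : 0 ≤ r := Real.sqrt_nonneg _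
  have hr1 : r ≤ 1 - δ/2 := by
    rw [hr, show (1 - δ/2) = Real.sqrt ((1-δ/2)^2) from (Real.sqrt_sq (by linarith)).symm]
    exact Real.sqrt_le_sqrt (by nlinarith)
  have hsub : Finset.Icc 1 m ⊆ Finset.range (m+1) := by
    intro j hj
    simp only [Finset.mem_Icc] at hj
    exact Finset.mem_range.2 (Nat.lt_succ_of_le hj.2)
  have hsM : s ≤ M / δ := by
    calc s = ∑ j ∈ Finset.Icc 1 m, a j := hsum.symm
      _ ≤ ∑ j ∈ Finset.Icc 1 m, (1 - δ)^j * M := Finset.sum_le_sum fun j hj => (ha j hj).2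
      _ ≤ ∑ j ∈ Finset.range (m+1), (1 - δ)^j * M :=
          Finset.sum_le_sum_of_subset_of_nonneg hsub (fun j _ _ => by positivity)
      _ = (∑ j ∈ Finset.range (m+1), (1 - δ)^j) * M := (Finset.sum_mul ..).symm
      _ ≤ (1/(1-(1-δ))) * M :=
          mul_le_mul_of_nonneg_right (geomAux _ h1δ (by linarith) _) hM.le
      _ = M / δ := by rw [show (1:ℝ)-(1-δ) = δ by ring]; ring
  set C := Real.sqrt (M*M/δ) with hCdef
  have hkey : ∀ j ∈ Finset.Icc 1 m,
      a j * Real.log s ≤ a j * Real.log (a j) + 2 * (C * r ^ j) := by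
    intro j hj
    obtain ⟨h1, h2⟩ := ha j hj
    have haj : 0 < a j := lt_of_lt_of_le one_pos h1
    have hdiv : 0 < s / a j := div_pos hs haj
    have e1 : Real.log (s / a j) = Real.log s - Real.log (a j) :=
      Real.log_div hs.ne' haj.ne'
    have e2 : a j * Real.log (s / a j) ≤ a j * (2 * Real.sqrt (s / a j)) :=
      mul_le_mul_of_nonneg_left (logAux _ hdiv) haj.le
    have e3 : a j * (2 * Real.sqrt (s / a j)) = 2 * Real.sqrt (s * a j) := by
      rw [show s * a j = (s / a j) * (a j)^2 by field_simp,
          Real.sqrt_mul hdiv.le, Real.sqrt_sq haj.le]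
      ring
    have e4 : Real.sqrt (s * a j) ≤ Real.sqrt ((M*M/δ) * (1-δ)^j) := by
      apply Real.sqrt_le_sqrt
      calc s * a j ≤ (M/δ) * ((1-δ)^j * M) :=
            mul_le_mul hsM h2 haj.le (by positivity)
        _ = (M*M/δ) * (1-δ)^j := by ring
    have e5 : Real.sqrt ((M*M/δ) * (1-δ)^j) = C * r ^ j := by
      rw [Real.sqrt_mul (by positivity),
          show (1-δ)^j = (r^j)^2 by rw [← pow_mul, mul_comm j 2, pow_mul, Real.sq_sqrt h1δ],
          Real.sqrt_sq (pow_nonneg hrpos j)]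
    nlinarith [e2]
  have hsum2 : ∑ j ∈ Finset.Icc 1 m, a j * Real.log s = s * Real.log s := by
    rw [← Finset.sum_mul, hsum]
  have hchain : s * Real.log s ≤ (∑ j ∈ Finset.Icc 1 m, a j * Real.log (a j))
      + ∑ j ∈ Finset.Icc 1 m, 2 * (C * r ^ j) := by
    rw [← hsum2, ← Finset.sum_add_distrib]
    exact Finset.sum_le_sum hkey
  have hgeo : ∑ j ∈ Finset.Icc 1 m, r ^ j ≤ 2/δ := by
    calc ∑ j ∈ Finset.Icc 1 m, r ^ j ≤ ∑ j ∈ Finset.range (m+1), r ^ j :=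
          Finset.sum_le_sum_of_subset_of_nonneg hsub (fun j _ _ => pow_nonneg hrpos j)
      _ ≤ 1/(1-r) := geomAux r hrpos (by linarith) _
      _ ≤ 2/δ := by
          rw [show (2:ℝ)/δ = 1/(δ/2) by rw [one_div_div]]
          exact one_div_le_one_div_of_le (by linarith) (by linarith)
  have hsd : Real.sqrt δ ≤ 1 := by
    rw [show (1:ℝ) = Real.sqrt 1 from Real.sqrt_one.symm]
    exact Real.sqrt_le_sqrt hδ1.le
  have hsdp : 0 < Real.sqrt δ := Real.sqrt_pos.2 hδ0
  have hds : δ ≤ Real.sqrt δ := by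
    nlinarith [Real.sq_sqrt hδ0.le]
  have hC : C = M / Real.sqrt δ := by
    rw [hCdef, Real.sqrt_div (by positivity), Real.sqrt_mul_self hM.le]
  have hfin : ∑ j ∈ Finset.Icc 1 m, 2 * (C * r ^ j) ≤ 4 * M / δ ^ 2 := by
    rw [← Finset.mul_sum, ← Finset.mul_sum]
    have hCpos : 0 ≤ C := Real.sqrt_nonneg _
    calc 2 * (C * ∑ j ∈ Finset.Icc 1 m, r ^ j) ≤ 2 * (C * (2/δ)) := by
          have := mul_le_mul_of_nonneg_left hgeo hCpos
          linarith
      _ = 4 * M / (Real.sqrt δ * δ) := by rw [hC]; field_simp; ring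
      _ ≤ 4 * M / δ ^ 2 := by
          apply div_le_div_of_nonneg_left (by positivity) (by positivity)
          nlinarith
  linarith
end
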